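/- arXiv:1602.05985 — 2 statements merged into one kernel-verified Lean document; each statement's English description precedes it below -/
import Mathlib

section
/- For all q, r ∈ Φ₂₄₀ there exist integers a, b such that 2⟪r,q⟫ = a + b·τ, and for this (unique) a one has r − a·q ∈ Φ₂₄₀. (Since every q ∈ Φ₂₄₀ has reduced squared norm (q,q)_τ = 1, the map r ↦ r − a·q is the reflection of r in the hyperplane orthogonal to q with respect to the reduced inner product; hence the 240 icosahedral pinors Φ₂₄₀ form a set closed under E₈ reflections, realizing the 240 roots of E₈.) -/
set_option maxRecDepth 10000000
set_option maxHeartbeats 40000000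

noncomputable section

open RealInnerProductSpace

/-- The golden ratio `τ = (1+√5)/2`. -/
def τ : ℝ := (1 + Real.sqrt 5) / 2

/-- The Galois conjugate `σ = (1-√5)/2 = 1 - τ` of the golden ratio. -/
def σ : ℝ := (1 - Real.sqrt 5) / 2

/-- The set of signs `{1, -1}`. -/
def Sgn : Set ℝ := {1, -1}

/-- The 120 roots of the `H₄` root system in Euclidean `ℝ⁴`:
the 8 permutations of `(±1,0,0,0)`, the 16 vectors `½(±1,±1,±1,±1)`, and the 96 even
coordinate permutations of `½(0,±1,±σ,±τ)` with all sign choices. -/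
def ΦH4 : Set (EuclideanSpace ℝ (Fin 4)) :=
  {q | ∃ ε ∈ Sgn, ∃ m : Fin 4, ∀ l, q l = if l = m then ε else 0} ∪
  {q | ∃ ε : Fin 4 → ℝ, (∀ m, ε m ∈ Sgn) ∧ ∀ m, q m = ε m / 2} ∪
  {q | ∃ π : Equiv.Perm (Fin 4), Equiv.Perm.sign π = 1 ∧
    ∃ ε : Fin 4 → ℝ, (∀ m, ε m ∈ Sgn) ∧ ∀ m, q m = ε m * ![0, 1, σ, τ] (π m) / 2}

/-- The 240 icosahedral pinors `Φ₂₄₀ = Φ_H4 ∪ τ·Φ_H4`, a set of 240 vectors in `ℝ⁴`. -/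
def Φ240 : Set (EuclideanSpace ℝ (Fin 4)) := ΦH4 ∪ (fun v => τ • v) '' ΦH4

/- ### Auxiliary development -/

abbrev V8 := ℤ×ℤ×ℤ×ℤ×ℤ×ℤ×ℤ×ℤ

def sq5 : ℝ := Real.sqrt 5

lemma h5 : sq5 * sq5 = 5 := Real.mul_self_sqrt (by norm_num)

/-- vector in `ℝ⁴` associated to an integer 8-tuple, with denominator 8 -/
def e8 (t : V8) : EuclideanSpace ℝ (Fin 4) :=
  WithLp.toLp 2 fun i => ![((t.1 : ℝ) + (t.2.1 : ℝ) * sq5)/8,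
             ((t.2.2.1 : ℝ) + (t.2.2.2.1 : ℝ) * sq5)/8,
             ((t.2.2.2.2.1 : ℝ) + (t.2.2.2.2.2.1 : ℝ) * sq5)/8,
             ((t.2.2.2.2.2.2.1 : ℝ) + (t.2.2.2.2.2.2.2 : ℝ) * sq5)/8] i

/-- vector in `ℝ⁴` associated to `Fin 4 → ℤ×ℤ`, with denominator 4 -/
def E4 (u : Fin 4 → ℤ×ℤ) : EuclideanSpace ℝ (Fin 4) :=
  WithLp.toLp 2 fun m => (((u m).1 : ℝ) + ((u m).2 : ℝ) * sq5)/4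

def toT (u : Fin 4 → ℤ×ℤ) : V8 :=
  ((u 0).1,(u 0).2,(u 1).1,(u 1).2,(u 2).1,(u 2).2,(u 3).1,(u 3).2)

def dbl (u : Fin 4 → ℤ×ℤ) : Fin 4 → ℤ×ℤ := fun m => (2*(u m).1, 2*(u m).2)

def tml (u : Fin 4 → ℤ×ℤ) : Fin 4 → ℤ×ℤ := fun m => ((u m).1 + 5*(u m).2, (u m).1 + (u m).2)

def negT (t : V8) : V8 :=
  (-t.1, -t.2.1, -t.2.2.1, -t.2.2.2.1, -t.2.2.2.2.1, -t.2.2.2.2.2.1, -t.2.2.2.2.2.2.1, -t.2.2.2.2.2.2.2)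

lemma e8_toT_dbl (u : Fin 4 → ℤ×ℤ) : e8 (toT (dbl u)) = E4 u := by
  ext i
  fin_cases i <;> simp [e8, E4, toT, dbl] <;> push_cast <;> ring

lemma e8_toT_tml (u : Fin 4 → ℤ×ℤ) : e8 (toT (tml u)) = τ • E4 u := by
  ext i
  have hτ : τ = (1 + sq5)/2 := rfl
  fin_cases i <;>
    simp [e8, E4, toT, tml, hτ] <;> push_cast <;>
    first
      | linear_combination (-((u 0).2 : ℝ)/8) * h5
      | linear_combination (-((u 1).2 : ℝ)/8) * h5
      | linear_combination (-((u 2).2 : ℝ)/8) * h5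
      | linear_combination (-((u 3).2 : ℝ)/8) * h5
      | ring

lemma e8_negT (t : V8) : e8 (negT t) = - e8 t := by
  ext i
  fin_cases i <;> simp [e8, negT] <;> push_cast <;> ring

/- ### trie for fast membership -/

inductive VT where
  | leaf (t : V8)
  | node (k : Nat) (l r : VT)

def F : VT → Nat → V8 → Bool
  | .leaf t, _, x => x == t
  | .node k l r, n, x => bif n < k then F l n x else F r n x

def elemsVT : VT → List V8
  | .leaf t => [t]
  | .node _ l r => elemsVT l ++ elemsVT r

lemma F_mem {T : VT} {n : Nat} {x : V8} (h : F T n x = true) : x ∈ elemsVT T := by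
  induction T with
  | leaf t => simp [elemsVT]; exact eq_of_beq h
  | node k l r ihl ihr =>
    simp only [elemsVT, List.mem_append]
    rcases hb : (n < k : Bool) with _ | _ <;> rw [F, hb] at h
    · exact Or.inr (ihr h)
    · exact Or.inl (ihl h)
/- ### generators of the H4 root system -/

def cz (b : Bool) : ℤ := if b then 1 else -1
def cR (b : Bool) : ℝ := if b then 1 else -1

def wre : Fin 4 → ℤ := ![0,2,1,1]
def wim : Fin 4 → ℤ := ![0,0,-1,1]

def u1 (s : Bool) (m : Fin 4) : Fin 4 → ℤ×ℤ := fun l => if l = m then (4*cz s, 0) else (0,0)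
def u2 (s : Fin 4 → Bool) : Fin 4 → ℤ×ℤ := fun m => (2*cz (s m), 0)
def u3 (π : Equiv.Perm (Fin 4)) (s : Fin 4 → Bool) : Fin 4 → ℤ×ℤ :=
  fun m => (cz (s m) * wre (π m), cz (s m) * wim (π m))

def PAR := Bool × ((Bool × Fin 4) ⊕ ((Fin 4 → Bool) ⊕ (Equiv.Perm (Fin 4) × (Fin 4 → Bool))))

def genU : (Bool × Fin 4) ⊕ ((Fin 4 → Bool) ⊕ (Equiv.Perm (Fin 4) × (Fin 4 → Bool))) →
    (Fin 4 → ℤ×ℤ)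
  | .inl (s, m) => u1 s m
  | .inr (.inl s) => u2 s
  | .inr (.inr (π, s)) => u3 π s

def valid : PAR → Bool
  | (_, .inr (.inr (π, _))) => decide (Equiv.Perm.sign π = 1)
  | _ => true

def tupleOf (p : PAR) : V8 := if p.1 then toT (tml (genU p.2)) else toT (dbl (genU p.2))
def TRIE : VT := (.node 605053782641925843063300 (.node 602690293557479661367808 (.node 600331416159058347420158 (.node 600331409401457733536258 (.node 597967927074616456509950 (.node 597967924820613324599808 (.node 597967922571010384593408 (.leaf ((Int.negSucc 7), (Int.ofNat 0), (Int.ofNat 0), (Int.ofNat 0), (Int.ofNat 0), (Int.ofNat 0), (Int.ofNat 0), (Int.ofNat 0))) (.node 597967922571014683755008 (.leaf ((Int.negSucc 5), (Int.negSucc 1), (Int.negSucc 3), (Int.ofNat 0), (Int.negSucc 1), (Int.negSucc 1), (Int.ofNat 0), (Int.ofNat 0))) (.leaf ((Int.negSucc 5), (Int.negSucc 1), (Int.negSucc 3), (Int.ofNat 0), (Int.ofNat 2), (Int.ofNat 2), (Int.ofNat 0), (Int.ofNat 0))))) (.node 597967927074607866575358 (.node 597967924820613324608000 (.leaf ((Int.negSucc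 5), (Int.negSucc 1), (Int.negSucc 1), (Int.negSucc 1), (Int.ofNat 0), (Int.ofNat 0), (Int.negSucc 3), (Int.ofNat 0))) (.leaf ((Int.negSucc 5), (Int.negSucc 1), (Int.negSucc 1), (Int.negSucc 1), (Int.ofNat 0), (Int.ofNat 0), (Int.ofNat 4), (Int.ofNat 0)))) (.node 597967927074607866579458 (.leaf ((Int.negSucc 5), (Int.negSucc 1), (Int.ofNat 0), (Int.ofNat 0), (Int.negSucc 3), (Int.ofNat 0), (Int.negSucc 1), (Int.negSucc 1))) (.leaf ((Int.negSucc 5), (Int.negSucc 1), (Int.ofNat 0), (Int.ofNat 0), (Int.negSucc 3), (Int.ofNat 0), (Int.ofNat 2), (Int.ofNat 2)))))) (.node 597967931578209639334400 (.node 597967929328610998481408 (.node 597967927074616456514050 (.leaf ((Int.negSucc 5), (Int.negSucc 1), (Int.ofNat 0), (Int.ofNat 0), (Int.ofNat 4), (Int.ofNat 0), (Int.negSucc 1), (Int.negSucc 1))) (.leaf ((Int.negSucc 5), (Int.negSucc 1), (Int.ofNat 0), (Int.ofNat 0), (Int.ofNat 4), (Int.ofNat 0), (Int.ofNat 2), (Int.ofNat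 2)))) (.node 597967929328610998489600 (.leaf ((Int.negSucc 5), (Int.negSucc 1), (Int.ofNat 2), (Int.ofNat 2), (Int.ofNat 0), (Int.ofNat 0), (Int.negSucc 3), (Int.ofNat 0))) (.leaf ((Int.negSucc 5), (Int.negSucc 1), (Int.ofNat 2), (Int.ofNat 2), (Int.ofNat 0), (Int.ofNat 0), (Int.ofNat 4), (Int.ofNat 0))))) (.node 600326804473037770457600 (.node 597967931578213938496000 (.leaf ((Int.negSucc 5), (Int.negSucc 1), (Int.ofNat 4), (Int.ofNat 0), (Int.negSucc 1), (Int.negSucc 1), (Int.ofNat 0), (Int.ofNat 0))) (.leaf ((Int.negSucc 5), (Int.negSucc 1), (Int.ofNat 4), (Int.ofNat 0), (Int.ofNat 2), (Int.ofNat 2), (Int.ofNat 0), (Int.ofNat 0)))) (.node 600331409401457733532158 (.leaf ((Int.negSucc 3), (Int.negSucc 3), (Int.ofNat 0), (Int.ofNat 0), (Int.ofNat 0), (Int.ofNat 0), (Int.ofNat 0), (Int.ofNat 0))) (.leaf ((Int.negSucc 3), (Int.ofNat 0), (Int.negSucc 5), (Int.negSucc 1), (Int.ofNat 0), (Int.ofNat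 0), (Int.negSucc 1), (Int.negSucc 1))))))) (.node 600331413905059506291200 (.node 600331411655460865438208 (.node 600331411655452275503616 (.leaf ((Int.negSucc 3), (Int.ofNat 0), (Int.negSucc 5), (Int.negSucc 1), (Int.ofNat 0), (Int.ofNat 0), (Int.ofNat 2), (Int.ofNat 2))) (.node 600331411655452275511808 (.leaf ((Int.negSucc 3), (Int.ofNat 0), (Int.negSucc 3), (Int.ofNat 0), (Int.negSucc 3), (Int.ofNat 0), (Int.negSucc 3), (Int.ofNat 0))) (.leaf ((Int.negSucc 3), (Int.ofNat 0), (Int.negSucc 3), (Int.ofNat 0), (Int.negSucc 3), (Int.ofNat 0), (Int.ofNat 4), (Int.ofNat 0))))) (.node 600331413905050916356608 (.node 600331411655460865446400 (.leaf ((Int.negSucc 3), (Int.ofNat 0), (Int.negSucc 3), (Int.ofNat 0), (Int.ofNat 4), (Int.ofNat 0), (Int.negSucc 3), (Int.ofNat 0))) (.leaf ((Int.negSucc 3), (Int.ofNat 0), (Int.negSucc 3), (Int.ofNat 0), (Int.ofNat 4), (Int.ofNat 0), (Int.ofNat 4), (Int.ofNat 0)))) (.node 600331413905055215518208 (.leaf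 ((Int.negSucc 3), (Int.ofNat 0), (Int.negSucc 1), (Int.negSucc 1), (Int.negSucc 5), (Int.negSucc 1), (Int.ofNat 0), (Int.ofNat 0))) (.leaf ((Int.negSucc 3), (Int.ofNat 0), (Int.negSucc 1), (Int.negSucc 1), (Int.negSucc 1), (Int.ofNat 2), (Int.ofNat 0), (Int.ofNat 0)))))) (.node 600331416159054048258558 (.node 600331413909455407413758 (.node 600331413905063805452800 (.leaf ((Int.negSucc 3), (Int.ofNat 0), (Int.negSucc 1), (Int.negSucc 1), (Int.ofNat 2), (Int.negSucc 1), (Int.ofNat 0), (Int.ofNat 0))) (.leaf ((Int.negSucc 3), (Int.ofNat 0), (Int.negSucc 1), (Int.negSucc 1), (Int.ofNat 6), (Int.ofNat 2), (Int.ofNat 0), (Int.ofNat 0)))) (.node 600331413909455407417858 (.leaf ((Int.negSucc 3), (Int.ofNat 0), (Int.negSucc 1), (Int.ofNat 2), (Int.ofNat 0), (Int.ofNat 0), (Int.negSucc 1), (Int.negSucc 1))) (.leaf ((Int.negSucc 3), (Int.ofNat 0), (Int.negSucc 1), (Int.ofNat 2), (Int.ofNat 0), (Int.ofNat 0), (Int.ofNat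 2), (Int.ofNat 2))))) (.node 600331416159054048266750 (.node 600331416159054048262658 (.leaf ((Int.negSucc 3), (Int.ofNat 0), (Int.ofNat 0), (Int.ofNat 0), (Int.negSucc 1), (Int.negSucc 1), (Int.negSucc 5), (Int.negSucc 1))) (.leaf ((Int.negSucc 3), (Int.ofNat 0), (Int.ofNat 0), (Int.ofNat 0), (Int.negSucc 1), (Int.negSucc 1), (Int.negSucc 1), (Int.ofNat 2)))) (.node 600331416159054048270850 (.leaf ((Int.negSucc 3), (Int.ofNat 0), (Int.ofNat 0), (Int.ofNat 0), (Int.negSucc 1), (Int.negSucc 1), (Int.ofNat 2), (Int.negSucc 1))) (.leaf ((Int.negSucc 3), (Int.ofNat 0), (Int.ofNat 0), (Int.ofNat 0), (Int.negSucc 1), (Int.negSucc 1), (Int.ofNat 6), (Int.ofNat 2)))))))) (.node 600331422916654662158850 (.node 600331418413052889399808 (.node 600331416159058347432450 (.node 600331416159058347424258 (.leaf ((Int.negSucc 3), (Int.ofNat 0), (Int.ofNat 0), (Int.ofNat 0), (Int.ofNat 2), (Int.ofNat 2), (Int.negSucc 5), (Int.negSucc 1))) (.node 600331416159058347428350 (.leaf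 ((Int.negSucc 3), (Int.ofNat 0), (Int.ofNat 0), (Int.ofNat 0), (Int.ofNat 2), (Int.ofNat 2), (Int.negSucc 1), (Int.ofNat 2))) (.leaf ((Int.negSucc 3), (Int.ofNat 0), (Int.ofNat 0), (Int.ofNat 0), (Int.ofNat 2), (Int.ofNat 2), (Int.ofNat 2), (Int.negSucc 1))))) (.node 600331418408656988277250 (.node 600331418408656988273150 (.leaf ((Int.negSucc 3), (Int.ofNat 0), (Int.ofNat 0), (Int.ofNat 0), (Int.ofNat 2), (Int.ofNat 2), (Int.ofNat 6), (Int.ofNat 2))) (.leaf ((Int.negSucc 3), (Int.ofNat 0), (Int.ofNat 2), (Int.negSucc 1), (Int.ofNat 0), (Int.ofNat 0), (Int.negSucc 1), (Int.negSucc 1)))) (.node 600331418413048590238208 (.leaf ((Int.negSucc 3), (Int.ofNat 0), (Int.ofNat 2), (Int.negSucc 1), (Int.ofNat 0), (Int.ofNat 0), (Int.ofNat 2), (Int.ofNat 2))) (.leaf ((Int.negSucc 3), (Int.ofNat 0), (Int.ofNat 2), (Int.ofNat 2), (Int.negSucc 5), (Int.negSucc 1), (Int.ofNat 0), (Int.ofNat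 0)))))) (.node 600331420662651530252800 (.node 600331418413061479334400 (.node 600331418413057180172800 (.leaf ((Int.negSucc 3), (Int.ofNat 0), (Int.ofNat 2), (Int.ofNat 2), (Int.negSucc 1), (Int.ofNat 2), (Int.ofNat 0), (Int.ofNat 0))) (.leaf ((Int.negSucc 3), (Int.ofNat 0), (Int.ofNat 2), (Int.ofNat 2), (Int.ofNat 2), (Int.negSucc 1), (Int.ofNat 0), (Int.ofNat 0)))) (.node 600331420662651530244608 (.leaf ((Int.negSucc 3), (Int.ofNat 0), (Int.ofNat 2), (Int.ofNat 2), (Int.ofNat 6), (Int.ofNat 2), (Int.ofNat 0), (Int.ofNat 0))) (.leaf ((Int.negSucc 3), (Int.ofNat 0), (Int.ofNat 4), (Int.ofNat 0), (Int.negSucc 3), (Int.ofNat 0), (Int.negSucc 3), (Int.ofNat 0))))) (.node 600331420662660120187392 (.node 600331420662660120179200 (.leaf ((Int.negSucc 3), (Int.ofNat 0), (Int.ofNat 4), (Int.ofNat 0), (Int.negSucc 3), (Int.ofNat 0), (Int.ofNat 4), (Int.ofNat 0))) (.leaf ((Int.negSucc 3), (Int.ofNat 0), (Int.ofNat 4),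 (Int.ofNat 0), (Int.ofNat 4), (Int.ofNat 0), (Int.negSucc 3), (Int.ofNat 0)))) (.node 600331422916654662154750 (.leaf ((Int.negSucc 3), (Int.ofNat 0), (Int.ofNat 4), (Int.ofNat 0), (Int.ofNat 4), (Int.ofNat 0), (Int.ofNat 4), (Int.ofNat 0))) (.leaf ((Int.negSucc 3), (Int.ofNat 0), (Int.ofNat 6), (Int.ofNat 2), (Int.ofNat 0), (Int.ofNat 0), (Int.negSucc 1), (Int.negSucc 1))))))) (.node 602690291303480820234750 (.node 602690289053882179381758 (.node 602690286799879047479808 (.leaf ((Int.negSucc 3), (Int.ofNat 0), (Int.ofNat 6), (Int.ofNat 2), (Int.ofNat 0), (Int.ofNat 0), (Int.ofNat 2), (Int.ofNat 2))) (.node 602690286799887637414400 (.leaf ((Int.negSucc 1), (Int.negSucc 1), (Int.negSucc 5), (Int.negSucc 1), (Int.negSucc 3), (Int.ofNat 0), (Int.ofNat 0), (Int.ofNat 0))) (.leaf ((Int.negSucc 1), (Int.negSucc 1), (Int.negSucc 5), (Int.negSucc 1), (Int.ofNat 4), (Int.ofNat 0), (Int.ofNat 0), (Int.ofNat 0)))))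 (.node 602690289053882179389950 (.node 602690289053882179385858 (.leaf ((Int.negSucc 1), (Int.negSucc 1), (Int.negSucc 3), (Int.ofNat 0), (Int.ofNat 0), (Int.ofNat 0), (Int.negSucc 5), (Int.negSucc 1))) (.leaf ((Int.negSucc 1), (Int.negSucc 1), (Int.negSucc 3), (Int.ofNat 0), (Int.ofNat 0), (Int.ofNat 0), (Int.negSucc 1), (Int.ofNat 2)))) (.node 602690289053882179394050 (.leaf ((Int.negSucc 1), (Int.negSucc 1), (Int.negSucc 3), (Int.ofNat 0), (Int.ofNat 0), (Int.ofNat 0), (Int.ofNat 2), (Int.negSucc 1))) (.leaf ((Int.negSucc 1), (Int.negSucc 1), (Int.negSucc 3), (Int.ofNat 0), (Int.ofNat 0), (Int.ofNat 0), (Int.ofNat 6), (Int.ofNat 2)))))) (.node 602690291307876721361408 (.node 602690291303485119396350 (.node 602690291303480820238850 (.leaf ((Int.negSucc 1), (Int.negSucc 1), (Int.negSucc 1), (Int.negSucc 1), (Int.negSucc 1), (Int.negSucc 1), (Int.negSucc 1), (Int.negSucc 1))) (.leaf ((Int.negSucc 1), (Int.negSucc 1), (Int.negSucc 1), (Int.negSucc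 1), (Int.negSucc 1), (Int.negSucc 1), (Int.ofNat 2), (Int.ofNat 2)))) (.node 602690291303485119400450 (.leaf ((Int.negSucc 1), (Int.negSucc 1), (Int.negSucc 1), (Int.negSucc 1), (Int.ofNat 2), (Int.ofNat 2), (Int.negSucc 1), (Int.negSucc 1))) (.leaf ((Int.negSucc 1), (Int.negSucc 1), (Int.negSucc 1), (Int.negSucc 1), (Int.ofNat 2), (Int.ofNat 2), (Int.ofNat 2), (Int.ofNat 2))))) (.node 602690293557475362206208 (.node 602690291307885311296000 (.leaf ((Int.negSucc 1), (Int.negSucc 1), (Int.negSucc 1), (Int.ofNat 2), (Int.negSucc 3), (Int.ofNat 0), (Int.ofNat 0), (Int.ofNat 0))) (.leaf ((Int.negSucc 1), (Int.negSucc 1), (Int.negSucc 1), (Int.ofNat 2), (Int.ofNat 4), (Int.ofNat 0), (Int.ofNat 0), (Int.ofNat 0)))) (.node 602690293557475362214400 (.leaf ((Int.negSucc 1), (Int.negSucc 1), (Int.ofNat 0), (Int.ofNat 0), (Int.negSucc 5), (Int.negSucc 1), (Int.negSucc 3), (Int.ofNat 0))) (.leaf ((Int.negSucc 1), (Int.negSucc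 1), (Int.ofNat 0), (Int.ofNat 0), (Int.negSucc 5), (Int.negSucc 1), (Int.ofNat 4), (Int.ofNat 0))))))))) (.node 605053773634726588318208 (.node 602690298061081434135042 (.node 602690295807086892155392 (.node 602690293557483952148992 (.node 602690293557479661376000 (.leaf ((Int.negSucc 1), (Int.negSucc 1), (Int.ofNat 0), (Int.ofNat 0), (Int.negSucc 1), (Int.ofNat 2), (Int.negSucc 3), (Int.ofNat 0))) (.node 602690293557483952140800 (.leaf ((Int.negSucc 1), (Int.negSucc 1), (Int.ofNat 0), (Int.ofNat 0), (Int.negSucc 1), (Int.ofNat 2), (Int.ofNat 4), (Int.ofNat 0))) (.leaf ((Int.negSucc 1), (Int.negSucc 1), (Int.ofNat 0), (Int.ofNat 0), (Int.ofNat 2), (Int.negSucc 1), (Int.negSucc 3), (Int.ofNat 0))))) (.node 602690293557488251310592 (.node 602690293557488251302400 (.leaf ((Int.negSucc 1), (Int.negSucc 1), (Int.ofNat 0), (Int.ofNat 0), (Int.ofNat 2), (Int.negSucc 1), (Int.ofNat 4), (Int.ofNat 0))) (.leaf ((Int.negSucc 1), (Int.negSucc 1), (Int.ofNat 0), (Int.ofNat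 0), (Int.ofNat 6), (Int.ofNat 2), (Int.negSucc 3), (Int.ofNat 0)))) (.node 602690295807078302220800 (.leaf ((Int.negSucc 1), (Int.negSucc 1), (Int.ofNat 0), (Int.ofNat 0), (Int.ofNat 6), (Int.ofNat 2), (Int.ofNat 4), (Int.ofNat 0))) (.leaf ((Int.negSucc 1), (Int.negSucc 1), (Int.ofNat 2), (Int.negSucc 1), (Int.negSucc 3), (Int.ofNat 0), (Int.ofNat 0), (Int.ofNat 0)))))) (.node 602690295811482793282050 (.node 602690295811478494120450 (.node 602690295811478494116350 (.leaf ((Int.negSucc 1), (Int.negSucc 1), (Int.ofNat 2), (Int.negSucc 1), (Int.ofNat 4), (Int.ofNat 0), (Int.ofNat 0), (Int.ofNat 0))) (.leaf ((Int.negSucc 1), (Int.negSucc 1), (Int.ofNat 2), (Int.ofNat 2), (Int.negSucc 1), (Int.negSucc 1), (Int.negSucc 1), (Int.negSucc 1)))) (.node 602690295811482793277950 (.leaf ((Int.negSucc 1), (Int.negSucc 1), (Int.ofNat 2), (Int.ofNat 2), (Int.negSucc 1), (Int.negSucc 1), (Int.ofNat 2), (Int.ofNat 2))) (.leaf ((Int.negSucc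 1), (Int.negSucc 1), (Int.ofNat 2), (Int.ofNat 2), (Int.ofNat 2), (Int.ofNat 2), (Int.negSucc 1), (Int.negSucc 1))))) (.node 602690298061081434126850 (.node 602690298061081434122750 (.leaf ((Int.negSucc 1), (Int.negSucc 1), (Int.ofNat 2), (Int.ofNat 2), (Int.ofNat 2), (Int.ofNat 2), (Int.ofNat 2), (Int.ofNat 2))) (.leaf ((Int.negSucc 1), (Int.negSucc 1), (Int.ofNat 4), (Int.ofNat 0), (Int.ofNat 0), (Int.ofNat 0), (Int.negSucc 5), (Int.negSucc 1)))) (.node 602690298061081434130942 (.leaf ((Int.negSucc 1), (Int.negSucc 1), (Int.ofNat 4), (Int.ofNat 0), (Int.ofNat 0), (Int.ofNat 0), (Int.negSucc 1), (Int.ofNat 2))) (.leaf ((Int.negSucc 1), (Int.negSucc 1), (Int.ofNat 4), (Int.ofNat 0), (Int.ofNat 0), (Int.ofNat 0), (Int.ofNat 2), (Int.negSucc 1))))))) (.node 602694905243495939176958 (.node 602694900739898457195008 (.node 602690300315075976102400 (.leaf ((Int.negSucc 1), (Int.negSucc 1), (Int.ofNat 4), (Int.ofNat 0), (Int.ofNat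 0), (Int.ofNat 0), (Int.ofNat 6), (Int.ofNat 2))) (.node 602690300315084566036992 (.leaf ((Int.negSucc 1), (Int.negSucc 1), (Int.ofNat 6), (Int.ofNat 2), (Int.negSucc 3), (Int.ofNat 0), (Int.ofNat 0), (Int.ofNat 0))) (.leaf ((Int.negSucc 1), (Int.negSucc 1), (Int.ofNat 6), (Int.ofNat 2), (Int.ofNat 4), (Int.ofNat 0), (Int.ofNat 0), (Int.ofNat 0))))) (.node 602694902989501397201408 (.node 602694900739902756356608 (.leaf ((Int.negSucc 1), (Int.ofNat 2), (Int.negSucc 3), (Int.ofNat 0), (Int.negSucc 1), (Int.negSucc 1), (Int.ofNat 0), (Int.ofNat 0))) (.leaf ((Int.negSucc 1), (Int.ofNat 2), (Int.negSucc 3), (Int.ofNat 0), (Int.ofNat 2), (Int.ofNat 2), (Int.ofNat 0), (Int.ofNat 0)))) (.node 602694902989501397209600 (.leaf ((Int.negSucc 1), (Int.ofNat 2), (Int.negSucc 1), (Int.negSucc 1), (Int.ofNat 0), (Int.ofNat 0), (Int.negSucc 3), (Int.ofNat 0))) (.leaf ((Int.negSucc 1), (Int.ofNat 2), (Int.negSucc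 1), (Int.negSucc 1), (Int.ofNat 0), (Int.ofNat 0), (Int.ofNat 4), (Int.ofNat 0)))))) (.node 602694907497499071083008 (.node 602694905243504529111550 (.node 602694905243495939181058 (.leaf ((Int.negSucc 1), (Int.ofNat 2), (Int.ofNat 0), (Int.ofNat 0), (Int.negSucc 3), (Int.ofNat 0), (Int.negSucc 1), (Int.negSucc 1))) (.leaf ((Int.negSucc 1), (Int.ofNat 2), (Int.ofNat 0), (Int.ofNat 0), (Int.negSucc 3), (Int.ofNat 0), (Int.ofNat 2), (Int.ofNat 2)))) (.node 602694905243504529115650 (.leaf ((Int.negSucc 1), (Int.ofNat 2), (Int.ofNat 0), (Int.ofNat 0), (Int.ofNat 4), (Int.ofNat 0), (Int.negSucc 1), (Int.negSucc 1))) (.leaf ((Int.negSucc 1), (Int.ofNat 2), (Int.ofNat 0), (Int.ofNat 0), (Int.ofNat 4), (Int.ofNat 0), (Int.ofNat 2), (Int.ofNat 2))))) (.node 602694909747097711936000 (.node 602694907497499071091200 (.leaf ((Int.negSucc 1), (Int.ofNat 2), (Int.ofNat 2), (Int.ofNat 2), (Int.ofNat 0), (Int.ofNat 0), (Int.negSucc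 3), (Int.ofNat 0))) (.leaf ((Int.negSucc 1), (Int.ofNat 2), (Int.ofNat 2), (Int.ofNat 2), (Int.ofNat 0), (Int.ofNat 0), (Int.ofNat 4), (Int.ofNat 0)))) (.node 602694909747102011097600 (.leaf ((Int.negSucc 1), (Int.ofNat 2), (Int.ofNat 4), (Int.ofNat 0), (Int.negSucc 1), (Int.negSucc 1), (Int.ofNat 0), (Int.ofNat 0))) (.leaf ((Int.negSucc 1), (Int.ofNat 2), (Int.ofNat 4), (Int.ofNat 0), (Int.ofNat 2), (Int.ofNat 2), (Int.ofNat 0), (Int.ofNat 0)))))))) (.node 605053780387922711149058 (.node 605053778138319771142658 (.node 605053775884329528324608 (.node 605053775884325229163008 (.leaf ((Int.ofNat 0), (Int.ofNat 0), (Int.negSucc 7), (Int.ofNat 0), (Int.ofNat 0), (Int.ofNat 0), (Int.ofNat 0), (Int.ofNat 0))) (.node 605053775884325229171200 (.leaf ((Int.ofNat 0), (Int.ofNat 0), (Int.negSucc 5), (Int.negSucc 1), (Int.negSucc 1), (Int.negSucc 1), (Int.negSucc 3), (Int.ofNat 0))) (.leaf ((Int.ofNat 0), (Int.ofNat 0),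 (Int.negSucc 5), (Int.negSucc 1), (Int.negSucc 1), (Int.negSucc 1), (Int.ofNat 4), (Int.ofNat 0))))) (.node 605053778133928169177600 (.node 605053775884329528332800 (.leaf ((Int.ofNat 0), (Int.ofNat 0), (Int.negSucc 5), (Int.negSucc 1), (Int.ofNat 2), (Int.ofNat 2), (Int.negSucc 3), (Int.ofNat 0))) (.leaf ((Int.ofNat 0), (Int.ofNat 0), (Int.negSucc 5), (Int.negSucc 1), (Int.ofNat 2), (Int.ofNat 2), (Int.ofNat 4), (Int.ofNat 0)))) (.node 605053778138319771138558 (.leaf ((Int.ofNat 0), (Int.ofNat 0), (Int.negSucc 3), (Int.negSucc 3), (Int.ofNat 0), (Int.ofNat 0), (Int.ofNat 0), (Int.ofNat 0))) (.leaf ((Int.ofNat 0), (Int.ofNat 0), (Int.negSucc 3), (Int.ofNat 0), (Int.negSucc 5), (Int.negSucc 1), (Int.negSucc 1), (Int.negSucc 1)))))) (.node 605053778138328361077250 (.node 605053778138324070304258 (.node 605053778138324070300158 (.leaf ((Int.ofNat 0), (Int.ofNat 0), (Int.negSucc 3), (Int.ofNat 0), (Int.negSucc 5), (Int.negSucc 1),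 (Int.ofNat 2), (Int.ofNat 2))) (.leaf ((Int.ofNat 0), (Int.ofNat 0), (Int.negSucc 3), (Int.ofNat 0), (Int.negSucc 1), (Int.ofNat 2), (Int.negSucc 1), (Int.negSucc 1)))) (.node 605053778138328361073150 (.leaf ((Int.ofNat 0), (Int.ofNat 0), (Int.negSucc 3), (Int.ofNat 0), (Int.negSucc 1), (Int.ofNat 2), (Int.ofNat 2), (Int.ofNat 2))) (.leaf ((Int.ofNat 0), (Int.ofNat 0), (Int.negSucc 3), (Int.ofNat 0), (Int.ofNat 2), (Int.negSucc 1), (Int.negSucc 1), (Int.negSucc 1))))) (.node 605053778138332660238850 (.node 605053778138332660234750 (.leaf ((Int.ofNat 0), (Int.ofNat 0), (Int.negSucc 3), (Int.ofNat 0), (Int.ofNat 2), (Int.negSucc 1), (Int.ofNat 2), (Int.ofNat 2))) (.leaf ((Int.ofNat 0), (Int.ofNat 0), (Int.negSucc 3), (Int.ofNat 0), (Int.ofNat 6), (Int.ofNat 2), (Int.negSucc 1), (Int.negSucc 1)))) (.node 605053780387922711144958 (.leaf ((Int.ofNat 0), (Int.ofNat 0), (Int.negSucc 3), (Int.ofNat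 0), (Int.ofNat 6), (Int.ofNat 2), (Int.ofNat 2), (Int.ofNat 2))) (.leaf ((Int.ofNat 0), (Int.ofNat 0), (Int.negSucc 1), (Int.negSucc 1), (Int.negSucc 3), (Int.ofNat 0), (Int.negSucc 5), (Int.negSucc 1))))))) (.node 605053780392322903044608 (.node 605053780387931301079550 (.node 605053780387922711153150 (.leaf ((Int.ofNat 0), (Int.ofNat 0), (Int.negSucc 1), (Int.negSucc 1), (Int.negSucc 3), (Int.ofNat 0), (Int.negSucc 1), (Int.ofNat 2))) (.node 605053780387922711157250 (.leaf ((Int.ofNat 0), (Int.ofNat 0), (Int.negSucc 1), (Int.negSucc 1), (Int.negSucc 3), (Int.ofNat 0), (Int.ofNat 2), (Int.negSucc 1))) (.leaf ((Int.ofNat 0), (Int.ofNat 0), (Int.negSucc 1), (Int.negSucc 1), (Int.negSucc 3), (Int.ofNat 0), (Int.ofNat 6), (Int.ofNat 2))))) (.node 605053780387931301087742 (.node 605053780387931301083650 (.leaf ((Int.ofNat 0), (Int.ofNat 0), (Int.negSucc 1), (Int.negSucc 1), (Int.ofNat 4), (Int.ofNat 0), (Int.negSucc 5), (Int.negSucc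 1))) (.leaf ((Int.ofNat 0), (Int.ofNat 0), (Int.negSucc 1), (Int.negSucc 1), (Int.ofNat 4), (Int.ofNat 0), (Int.negSucc 1), (Int.ofNat 2)))) (.node 605053780387931301091842 (.leaf ((Int.ofNat 0), (Int.ofNat 0), (Int.negSucc 1), (Int.negSucc 1), (Int.ofNat 4), (Int.ofNat 0), (Int.ofNat 2), (Int.negSucc 1))) (.leaf ((Int.ofNat 0), (Int.ofNat 0), (Int.negSucc 1), (Int.negSucc 1), (Int.ofNat 4), (Int.ofNat 0), (Int.ofNat 6), (Int.ofNat 2)))))) (.node 605053782641917253124608 (.node 605053780392327202206208 (.node 605053780392322903052800 (.leaf ((Int.ofNat 0), (Int.ofNat 0), (Int.negSucc 1), (Int.ofNat 2), (Int.negSucc 1), (Int.negSucc 1), (Int.negSucc 3), (Int.ofNat 0))) (.leaf ((Int.ofNat 0), (Int.ofNat 0), (Int.negSucc 1), (Int.ofNat 2), (Int.negSucc 1), (Int.negSucc 1), (Int.ofNat 4), (Int.ofNat 0)))) (.node 605053780392327202214400 (.leaf ((Int.ofNat 0), (Int.ofNat 0), (Int.negSucc 1), (Int.ofNat 2), (Int.ofNat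 2), (Int.ofNat 2), (Int.negSucc 3), (Int.ofNat 0))) (.leaf ((Int.ofNat 0), (Int.ofNat 0), (Int.negSucc 1), (Int.ofNat 2), (Int.ofNat 2), (Int.ofNat 2), (Int.ofNat 4), (Int.ofNat 0))))) (.node 605053782641925843051008 (.node 605053782641921543897600 (.leaf ((Int.ofNat 0), (Int.ofNat 0), (Int.ofNat 0), (Int.ofNat 0), (Int.negSucc 7), (Int.ofNat 0), (Int.ofNat 0), (Int.ofNat 0))) (.leaf ((Int.ofNat 0), (Int.ofNat 0), (Int.ofNat 0), (Int.ofNat 0), (Int.negSucc 3), (Int.negSucc 3), (Int.ofNat 0), (Int.ofNat 0)))) (.node 605053782641925843055100 (.leaf ((Int.ofNat 0), (Int.ofNat 0), (Int.ofNat 0), (Int.ofNat 0), (Int.ofNat 0), (Int.ofNat 0), (Int.negSucc 7), (Int.ofNat 0))) (.leaf ((Int.ofNat 0), (Int.ofNat 0), (Int.ofNat 0), (Int.ofNat 0), (Int.ofNat 0), (Int.ofNat 0), (Int.negSucc 3), (Int.negSucc 3)))))))))) (.node 607417271726376323904000 (.node 607412655536749675020800 (.node 605053784895928974973442 (.node 605053784891528783073792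 (.node 605053782641934432993792 (.node 605053782641925843067392 (.leaf ((Int.ofNat 0), (Int.ofNat 0), (Int.ofNat 0), (Int.ofNat 0), (Int.ofNat 0), (Int.ofNat 0), (Int.ofNat 4), (Int.ofNat 4))) (.node 605053782641930142220800 (.leaf ((Int.ofNat 0), (Int.ofNat 0), (Int.ofNat 0), (Int.ofNat 0), (Int.ofNat 0), (Int.ofNat 0), (Int.ofNat 8), (Int.ofNat 0))) (.leaf ((Int.ofNat 0), (Int.ofNat 0), (Int.ofNat 0), (Int.ofNat 0), (Int.ofNat 4), (Int.ofNat 4), (Int.ofNat 0), (Int.ofNat 0))))) (.node 605053784891524483912192 (.node 605053784891524483904000 (.leaf ((Int.ofNat 0), (Int.ofNat 0), (Int.ofNat 0), (Int.ofNat 0), (Int.ofNat 8), (Int.ofNat 0), (Int.ofNat 0), (Int.ofNat 0))) (.leaf ((Int.ofNat 0), (Int.ofNat 0), (Int.ofNat 2), (Int.negSucc 1), (Int.negSucc 1), (Int.negSucc 1), (Int.negSucc 3), (Int.ofNat 0)))) (.node 605053784891528783065600 (.leaf ((Int.ofNat 0), (Int.ofNat 0), (Int.ofNat 2), (Int.negSucc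 1), (Int.negSucc 1), (Int.negSucc 1), (Int.ofNat 4), (Int.ofNat 0))) (.leaf ((Int.ofNat 0), (Int.ofNat 0), (Int.ofNat 2), (Int.negSucc 1), (Int.ofNat 2), (Int.ofNat 2), (Int.negSucc 3), (Int.ofNat 0)))))) (.node 605053784895920385038850 (.node 605053784895920385030658 (.node 605053784895920385026558 (.leaf ((Int.ofNat 0), (Int.ofNat 0), (Int.ofNat 2), (Int.negSucc 1), (Int.ofNat 2), (Int.ofNat 2), (Int.ofNat 4), (Int.ofNat 0))) (.leaf ((Int.ofNat 0), (Int.ofNat 0), (Int.ofNat 2), (Int.ofNat 2), (Int.negSucc 3), (Int.ofNat 0), (Int.negSucc 5), (Int.negSucc 1)))) (.node 605053784895920385034750 (.leaf ((Int.ofNat 0), (Int.ofNat 0), (Int.ofNat 2), (Int.ofNat 2), (Int.negSucc 3), (Int.ofNat 0), (Int.negSucc 1), (Int.ofNat 2))) (.leaf ((Int.ofNat 0), (Int.ofNat 0), (Int.ofNat 2), (Int.ofNat 2), (Int.negSucc 3), (Int.ofNat 0), (Int.ofNat 2), (Int.negSucc 1))))) (.node 605053784895928974965250 (.node 605053784895928974961150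 (.leaf ((Int.ofNat 0), (Int.ofNat 0), (Int.ofNat 2), (Int.ofNat 2), (Int.negSucc 3), (Int.ofNat 0), (Int.ofNat 6), (Int.ofNat 2))) (.leaf ((Int.ofNat 0), (Int.ofNat 0), (Int.ofNat 2), (Int.ofNat 2), (Int.ofNat 4), (Int.ofNat 0), (Int.negSucc 5), (Int.negSucc 1)))) (.node 605053784895928974969342 (.leaf ((Int.ofNat 0), (Int.ofNat 0), (Int.ofNat 2), (Int.ofNat 2), (Int.ofNat 4), (Int.ofNat 0), (Int.negSucc 1), (Int.ofNat 2))) (.leaf ((Int.ofNat 0), (Int.ofNat 0), (Int.ofNat 2), (Int.ofNat 2), (Int.ofNat 4), (Int.ofNat 0), (Int.ofNat 2), (Int.negSucc 1))))))) (.node 605053787145531914975742 (.node 605053787145523325041150 (.node 605053787145519025879550 (.leaf ((Int.ofNat 0), (Int.ofNat 0), (Int.ofNat 2), (Int.ofNat 2), (Int.ofNat 4), (Int.ofNat 0), (Int.ofNat 6), (Int.ofNat 2))) (.node 605053787145519025883650 (.leaf ((Int.ofNat 0), (Int.ofNat 0), (Int.ofNat 4), (Int.ofNat 0), (Int.negSucc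 5), (Int.negSucc 1), (Int.negSucc 1), (Int.negSucc 1))) (.leaf ((Int.ofNat 0), (Int.ofNat 0), (Int.ofNat 4), (Int.ofNat 0), (Int.negSucc 5), (Int.negSucc 1), (Int.ofNat 2), (Int.ofNat 2))))) (.node 605053787145527615814142 (.node 605053787145523325045250 (.leaf ((Int.ofNat 0), (Int.ofNat 0), (Int.ofNat 4), (Int.ofNat 0), (Int.negSucc 1), (Int.ofNat 2), (Int.negSucc 1), (Int.negSucc 1))) (.leaf ((Int.ofNat 0), (Int.ofNat 0), (Int.ofNat 4), (Int.ofNat 0), (Int.negSucc 1), (Int.ofNat 2), (Int.ofNat 2), (Int.ofNat 2)))) (.node 605053787145527615818242 (.leaf ((Int.ofNat 0), (Int.ofNat 0), (Int.ofNat 4), (Int.ofNat 0), (Int.ofNat 2), (Int.negSucc 1), (Int.negSucc 1), (Int.negSucc 1))) (.leaf ((Int.ofNat 0), (Int.ofNat 0), (Int.ofNat 4), (Int.ofNat 0), (Int.ofNat 2), (Int.negSucc 1), (Int.ofNat 2), (Int.ofNat 2)))))) (.node 605053789399522157793792 (.node 605053787149923516940800 (.node 605053787145531914979842 (.leaf ((Int.ofNat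 0), (Int.ofNat 0), (Int.ofNat 4), (Int.ofNat 0), (Int.ofNat 6), (Int.ofNat 2), (Int.negSucc 1), (Int.negSucc 1))) (.leaf ((Int.ofNat 0), (Int.ofNat 0), (Int.ofNat 4), (Int.ofNat 0), (Int.ofNat 6), (Int.ofNat 2), (Int.ofNat 2), (Int.ofNat 2)))) (.node 605053789399522157785600 (.leaf ((Int.ofNat 0), (Int.ofNat 0), (Int.ofNat 4), (Int.ofNat 4), (Int.ofNat 0), (Int.ofNat 0), (Int.ofNat 0), (Int.ofNat 0))) (.leaf ((Int.ofNat 0), (Int.ofNat 0), (Int.ofNat 6), (Int.ofNat 2), (Int.negSucc 1), (Int.negSucc 1), (Int.negSucc 3), (Int.ofNat 0))))) (.node 605053789399526456955392 (.node 605053789399526456947200 (.leaf ((Int.ofNat 0), (Int.ofNat 0), (Int.ofNat 6), (Int.ofNat 2), (Int.negSucc 1), (Int.negSucc 1), (Int.ofNat 4), (Int.ofNat 0))) (.leaf ((Int.ofNat 0), (Int.ofNat 0), (Int.ofNat 6), (Int.ofNat 2), (Int.ofNat 2), (Int.ofNat 2), (Int.negSucc 3), (Int.ofNat 0)))) (.node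 605053791649125097800192 (.leaf ((Int.ofNat 0), (Int.ofNat 0), (Int.ofNat 6), (Int.ofNat 2), (Int.ofNat 2), (Int.ofNat 2), (Int.ofNat 4), (Int.ofNat 0))) (.leaf ((Int.ofNat 0), (Int.ofNat 0), (Int.ofNat 8), (Int.ofNat 0), (Int.ofNat 0), (Int.ofNat 0), (Int.ofNat 0), (Int.ofNat 0)))))))) (.node 607417267222770251987458 (.node 607412660040355746941442 (.node 607412657786352615035392 (.node 607412655536753974182400 (.leaf ((Int.ofNat 2), (Int.negSucc 1), (Int.negSucc 3), (Int.ofNat 0), (Int.negSucc 1), (Int.negSucc 1), (Int.ofNat 0), (Int.ofNat 0))) (.node 607412657786352615027200 (.leaf ((Int.ofNat 2), (Int.negSucc 1), (Int.negSucc 3), (Int.ofNat 0), (Int.ofNat 2), (Int.ofNat 2), (Int.ofNat 0), (Int.ofNat 0))) (.leaf ((Int.ofNat 2), (Int.negSucc 1), (Int.negSucc 1), (Int.negSucc 1), (Int.ofNat 0), (Int.ofNat 0), (Int.negSucc 3), (Int.ofNat 0))))) (.node 607412660040347157006850 (.node 607412660040347157002750 (.leaf ((Int.ofNat 2), (Int.negSucc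 1), (Int.negSucc 1), (Int.negSucc 1), (Int.ofNat 0), (Int.ofNat 0), (Int.ofNat 4), (Int.ofNat 0))) (.leaf ((Int.ofNat 2), (Int.negSucc 1), (Int.ofNat 0), (Int.ofNat 0), (Int.negSucc 3), (Int.ofNat 0), (Int.negSucc 1), (Int.negSucc 1)))) (.node 607412660040355746937342 (.leaf ((Int.ofNat 2), (Int.negSucc 1), (Int.ofNat 0), (Int.ofNat 0), (Int.negSucc 3), (Int.ofNat 0), (Int.ofNat 2), (Int.ofNat 2))) (.leaf ((Int.ofNat 2), (Int.negSucc 1), (Int.ofNat 0), (Int.ofNat 0), (Int.ofNat 4), (Int.ofNat 0), (Int.negSucc 1), (Int.negSucc 1)))))) (.node 607412664543953228923392 (.node 607412662294350288916992 (.node 607412662294350288908800 (.leaf ((Int.ofNat 2), (Int.negSucc 1), (Int.ofNat 0), (Int.ofNat 0), (Int.ofNat 4), (Int.ofNat 0), (Int.ofNat 2), (Int.ofNat 2))) (.leaf ((Int.ofNat 2), (Int.negSucc 1), (Int.ofNat 2), (Int.ofNat 2), (Int.ofNat 0), (Int.ofNat 0), (Int.negSucc 3), (Int.ofNat 0))))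 (.node 607412664543948929761792 (.leaf ((Int.ofNat 2), (Int.negSucc 1), (Int.ofNat 2), (Int.ofNat 2), (Int.ofNat 0), (Int.ofNat 0), (Int.ofNat 4), (Int.ofNat 0))) (.leaf ((Int.ofNat 2), (Int.negSucc 1), (Int.ofNat 4), (Int.ofNat 0), (Int.negSucc 1), (Int.negSucc 1), (Int.ofNat 0), (Int.ofNat 0))))) (.node 607417264968775710016000 (.node 607417264968767120081408 (.leaf ((Int.ofNat 2), (Int.negSucc 1), (Int.ofNat 4), (Int.ofNat 0), (Int.ofNat 2), (Int.ofNat 2), (Int.ofNat 0), (Int.ofNat 0))) (.leaf ((Int.ofNat 2), (Int.ofNat 2), (Int.negSucc 5), (Int.negSucc 1), (Int.negSucc 3), (Int.ofNat 0), (Int.ofNat 0), (Int.ofNat 0)))) (.node 607417267222770251983358 (.leaf ((Int.ofNat 2), (Int.ofNat 2), (Int.negSucc 5), (Int.negSucc 1), (Int.ofNat 4), (Int.ofNat 0), (Int.ofNat 0), (Int.ofNat 0))) (.leaf ((Int.ofNat 2), (Int.ofNat 2), (Int.negSucc 3), (Int.ofNat 0), (Int.ofNat 0), (Int.ofNat 0),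 (Int.negSucc 5), (Int.negSucc 1))))))) (.node 607417269476764793963008 (.node 607417269472368892836350 (.node 607417267222770251991550 (.leaf ((Int.ofNat 2), (Int.ofNat 2), (Int.negSucc 3), (Int.ofNat 0), (Int.ofNat 0), (Int.ofNat 0), (Int.negSucc 1), (Int.ofNat 2))) (.node 607417267222770251995650 (.leaf ((Int.ofNat 2), (Int.ofNat 2), (Int.negSucc 3), (Int.ofNat 0), (Int.ofNat 0), (Int.ofNat 0), (Int.ofNat 2), (Int.negSucc 1))) (.leaf ((Int.ofNat 2), (Int.ofNat 2), (Int.negSucc 3), (Int.ofNat 0), (Int.ofNat 0), (Int.ofNat 0), (Int.ofNat 6), (Int.ofNat 2))))) (.node 607417269472373191997950 (.node 607417269472368892840450 (.leaf ((Int.ofNat 2), (Int.ofNat 2), (Int.negSucc 1), (Int.negSucc 1), (Int.negSucc 1), (Int.negSucc 1), (Int.negSucc 1), (Int.negSucc 1))) (.leaf ((Int.ofNat 2), (Int.ofNat 2), (Int.negSucc 1), (Int.negSucc 1), (Int.negSucc 1), (Int.negSucc 1), (Int.ofNat 2), (Int.ofNat 2)))) (.node 607417269472373192002050 (.leaf ((Int.ofNat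 2), (Int.ofNat 2), (Int.negSucc 1), (Int.negSucc 1), (Int.ofNat 2), (Int.ofNat 2), (Int.negSucc 1), (Int.negSucc 1))) (.leaf ((Int.ofNat 2), (Int.ofNat 2), (Int.negSucc 1), (Int.negSucc 1), (Int.ofNat 2), (Int.ofNat 2), (Int.ofNat 2), (Int.ofNat 2)))))) (.node 607417271726367733969408 (.node 607417271726363434807808 (.node 607417269476773383897600 (.leaf ((Int.ofNat 2), (Int.ofNat 2), (Int.negSucc 1), (Int.ofNat 2), (Int.negSucc 3), (Int.ofNat 0), (Int.ofNat 0), (Int.ofNat 0))) (.leaf ((Int.ofNat 2), (Int.ofNat 2), (Int.negSucc 1), (Int.ofNat 2), (Int.ofNat 4), (Int.ofNat 0), (Int.ofNat 0), (Int.ofNat 0)))) (.node 607417271726363434816000 (.leaf ((Int.ofNat 2), (Int.ofNat 2), (Int.ofNat 0), (Int.ofNat 0), (Int.negSucc 5), (Int.negSucc 1), (Int.negSucc 3), (Int.ofNat 0))) (.leaf ((Int.ofNat 2), (Int.ofNat 2), (Int.ofNat 0), (Int.ofNat 0), (Int.negSucc 5), (Int.negSucc 1), (Int.ofNat 4), (Int.ofNat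 0))))) (.node 607417271726372024742400 (.node 607417271726367733977600 (.leaf ((Int.ofNat 2), (Int.ofNat 2), (Int.ofNat 0), (Int.ofNat 0), (Int.negSucc 1), (Int.ofNat 2), (Int.negSucc 3), (Int.ofNat 0))) (.leaf ((Int.ofNat 2), (Int.ofNat 2), (Int.ofNat 0), (Int.ofNat 0), (Int.negSucc 1), (Int.ofNat 2), (Int.ofNat 4), (Int.ofNat 0)))) (.node 607417271726372024750592 (.leaf ((Int.ofNat 2), (Int.ofNat 2), (Int.ofNat 0), (Int.ofNat 0), (Int.ofNat 2), (Int.negSucc 1), (Int.negSucc 3), (Int.ofNat 0))) (.leaf ((Int.ofNat 2), (Int.ofNat 2), (Int.ofNat 0), (Int.ofNat 0), (Int.ofNat 2), (Int.negSucc 1), (Int.ofNat 4), (Int.ofNat 0))))))))) (.node 609776149124797637847550 (.node 609776142367197023963650 (.node 607417273980370865883650 (.node 607417273975974964756992 (.node 607417271726376323912192 (.leaf ((Int.ofNat 2), (Int.ofNat 2), (Int.ofNat 0), (Int.ofNat 0), (Int.ofNat 6), (Int.ofNat 2), (Int.negSucc 3), (Int.ofNat 0))) (.node 607417273975966374822400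 (.leaf ((Int.ofNat 2), (Int.ofNat 2), (Int.ofNat 0), (Int.ofNat 0), (Int.ofNat 6), (Int.ofNat 2), (Int.ofNat 4), (Int.ofNat 0))) (.leaf ((Int.ofNat 2), (Int.ofNat 2), (Int.ofNat 2), (Int.negSucc 1), (Int.negSucc 3), (Int.ofNat 0), (Int.ofNat 0), (Int.ofNat 0))))) (.node 607417273980366566722050 (.node 607417273980366566717950 (.leaf ((Int.ofNat 2), (Int.ofNat 2), (Int.ofNat 2), (Int.negSucc 1), (Int.ofNat 4), (Int.ofNat 0), (Int.ofNat 0), (Int.ofNat 0))) (.leaf ((Int.ofNat 2), (Int.ofNat 2), (Int.ofNat 2), (Int.ofNat 2), (Int.negSucc 1), (Int.negSucc 1), (Int.negSucc 1), (Int.negSucc 1)))) (.node 607417273980370865879550 (.leaf ((Int.ofNat 2), (Int.ofNat 2), (Int.ofNat 2), (Int.ofNat 2), (Int.negSucc 1), (Int.negSucc 1), (Int.ofNat 2), (Int.ofNat 2))) (.leaf ((Int.ofNat 2), (Int.ofNat 2), (Int.ofNat 2), (Int.ofNat 2), (Int.ofNat 2), (Int.ofNat 2), (Int.negSucc 1),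 (Int.negSucc 1)))))) (.node 607417276229969506736642 (.node 607417276229969506728450 (.node 607417276229969506724350 (.leaf ((Int.ofNat 2), (Int.ofNat 2), (Int.ofNat 2), (Int.ofNat 2), (Int.ofNat 2), (Int.ofNat 2), (Int.ofNat 2), (Int.ofNat 2))) (.leaf ((Int.ofNat 2), (Int.ofNat 2), (Int.ofNat 4), (Int.ofNat 0), (Int.ofNat 0), (Int.ofNat 0), (Int.negSucc 5), (Int.negSucc 1)))) (.node 607417276229969506732542 (.leaf ((Int.ofNat 2), (Int.ofNat 2), (Int.ofNat 4), (Int.ofNat 0), (Int.ofNat 0), (Int.ofNat 0), (Int.negSucc 1), (Int.ofNat 2))) (.leaf ((Int.ofNat 2), (Int.ofNat 2), (Int.ofNat 4), (Int.ofNat 0), (Int.ofNat 0), (Int.ofNat 0), (Int.ofNat 2), (Int.negSucc 1))))) (.node 607417278483972638638592 (.node 607417278483964048704000 (.leaf ((Int.ofNat 2), (Int.ofNat 2), (Int.ofNat 4), (Int.ofNat 0), (Int.ofNat 0), (Int.ofNat 0), (Int.ofNat 6), (Int.ofNat 2))) (.leaf ((Int.ofNat 2), (Int.ofNat 2), (Int.ofNat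 6), (Int.ofNat 2), (Int.negSucc 3), (Int.ofNat 0), (Int.ofNat 0), (Int.ofNat 0)))) (.node 609776142367197023959550 (.leaf ((Int.ofNat 2), (Int.ofNat 2), (Int.ofNat 6), (Int.ofNat 2), (Int.ofNat 4), (Int.ofNat 0), (Int.ofNat 0), (Int.ofNat 0))) (.leaf ((Int.ofNat 4), (Int.ofNat 0), (Int.negSucc 5), (Int.negSucc 1), (Int.ofNat 0), (Int.ofNat 0), (Int.negSucc 1), (Int.negSucc 1))))))) (.node 609776146870798796718592 (.node 609776144621200155865600 (.node 609776144621191565931008 (.leaf ((Int.ofNat 4), (Int.ofNat 0), (Int.negSucc 5), (Int.negSucc 1), (Int.ofNat 0), (Int.ofNat 0), (Int.ofNat 2), (Int.ofNat 2))) (.node 609776144621191565939200 (.leaf ((Int.ofNat 4), (Int.ofNat 0), (Int.negSucc 3), (Int.ofNat 0), (Int.negSucc 3), (Int.ofNat 0), (Int.negSucc 3), (Int.ofNat 0))) (.leaf ((Int.ofNat 4), (Int.ofNat 0), (Int.negSucc 3), (Int.ofNat 0), (Int.negSucc 3), (Int.ofNat 0), (Int.ofNat 4), (Int.ofNat 0)))))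 (.node 609776146870790206784000 (.node 609776144621200155873792 (.leaf ((Int.ofNat 4), (Int.ofNat 0), (Int.negSucc 3), (Int.ofNat 0), (Int.ofNat 4), (Int.ofNat 0), (Int.negSucc 3), (Int.ofNat 0))) (.leaf ((Int.ofNat 4), (Int.ofNat 0), (Int.negSucc 3), (Int.ofNat 0), (Int.ofNat 4), (Int.ofNat 0), (Int.ofNat 4), (Int.ofNat 0)))) (.node 609776146870794505945600 (.leaf ((Int.ofNat 4), (Int.ofNat 0), (Int.negSucc 1), (Int.negSucc 1), (Int.negSucc 5), (Int.negSucc 1), (Int.ofNat 0), (Int.ofNat 0))) (.leaf ((Int.ofNat 4), (Int.ofNat 0), (Int.negSucc 1), (Int.negSucc 1), (Int.negSucc 1), (Int.ofNat 2), (Int.ofNat 0), (Int.ofNat 0)))))) (.node 609776149124793338685950 (.node 609776146875194697841150 (.node 609776146870803095880192 (.leaf ((Int.ofNat 4), (Int.ofNat 0), (Int.negSucc 1), (Int.negSucc 1), (Int.ofNat 2), (Int.negSucc 1), (Int.ofNat 0), (Int.ofNat 0))) (.leaf ((Int.ofNat 4), (Int.ofNat 0), (Int.negSucc 1), (Int.negSucc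 1), (Int.ofNat 6), (Int.ofNat 2), (Int.ofNat 0), (Int.ofNat 0)))) (.node 609776146875194697845250 (.leaf ((Int.ofNat 4), (Int.ofNat 0), (Int.negSucc 1), (Int.ofNat 2), (Int.ofNat 0), (Int.ofNat 0), (Int.negSucc 1), (Int.negSucc 1))) (.leaf ((Int.ofNat 4), (Int.ofNat 0), (Int.negSucc 1), (Int.ofNat 2), (Int.ofNat 0), (Int.ofNat 0), (Int.ofNat 2), (Int.ofNat 2))))) (.node 609776149124793338694142 (.node 609776149124793338690050 (.leaf ((Int.ofNat 4), (Int.ofNat 0), (Int.ofNat 0), (Int.ofNat 0), (Int.negSucc 1), (Int.negSucc 1), (Int.negSucc 5), (Int.negSucc 1))) (.leaf ((Int.ofNat 4), (Int.ofNat 0), (Int.ofNat 0), (Int.ofNat 0), (Int.negSucc 1), (Int.negSucc 1), (Int.negSucc 1), (Int.ofNat 2)))) (.node 609776149124793338698242 (.leaf ((Int.ofNat 4), (Int.ofNat 0), (Int.ofNat 0), (Int.ofNat 0), (Int.negSucc 1), (Int.negSucc 1), (Int.ofNat 2), (Int.negSucc 1))) (.leaf ((Int.ofNat 4), (Int.ofNat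 0), (Int.ofNat 0), (Int.ofNat 0), (Int.negSucc 1), (Int.negSucc 1), (Int.ofNat 6), (Int.ofNat 2)))))))) (.node 609776155882393952586242 (.node 609776151378792179827200 (.node 609776149124797637859842 (.node 609776149124797637851650 (.leaf ((Int.ofNat 4), (Int.ofNat 0), (Int.ofNat 0), (Int.ofNat 0), (Int.ofNat 2), (Int.ofNat 2), (Int.negSucc 5), (Int.negSucc 1))) (.node 609776149124797637855742 (.leaf ((Int.ofNat 4), (Int.ofNat 0), (Int.ofNat 0), (Int.ofNat 0), (Int.ofNat 2), (Int.ofNat 2), (Int.negSucc 1), (Int.ofNat 2))) (.leaf ((Int.ofNat 4), (Int.ofNat 0), (Int.ofNat 0), (Int.ofNat 0), (Int.ofNat 2), (Int.ofNat 2), (Int.ofNat 2), (Int.negSucc 1))))) (.node 609776151374396278704642 (.node 609776151374396278700542 (.leaf ((Int.ofNat 4), (Int.ofNat 0), (Int.ofNat 0), (Int.ofNat 0), (Int.ofNat 2), (Int.ofNat 2), (Int.ofNat 6), (Int.ofNat 2))) (.leaf ((Int.ofNat 4), (Int.ofNat 0), (Int.ofNat 2), (Int.negSucc 1), (Int.ofNat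 0), (Int.ofNat 0), (Int.negSucc 1), (Int.negSucc 1)))) (.node 609776151378787880665600 (.leaf ((Int.ofNat 4), (Int.ofNat 0), (Int.ofNat 2), (Int.negSucc 1), (Int.ofNat 0), (Int.ofNat 0), (Int.ofNat 2), (Int.ofNat 2))) (.leaf ((Int.ofNat 4), (Int.ofNat 0), (Int.ofNat 2), (Int.ofNat 2), (Int.negSucc 5), (Int.negSucc 1), (Int.ofNat 0), (Int.ofNat 0)))))) (.node 609776153628390820680192 (.node 609776151378800769761792 (.node 609776151378796470600192 (.leaf ((Int.ofNat 4), (Int.ofNat 0), (Int.ofNat 2), (Int.ofNat 2), (Int.negSucc 1), (Int.ofNat 2), (Int.ofNat 0), (Int.ofNat 0))) (.leaf ((Int.ofNat 4), (Int.ofNat 0), (Int.ofNat 2), (Int.ofNat 2), (Int.ofNat 2), (Int.negSucc 1), (Int.ofNat 0), (Int.ofNat 0)))) (.node 609776153628390820672000 (.leaf ((Int.ofNat 4), (Int.ofNat 0), (Int.ofNat 2), (Int.ofNat 2), (Int.ofNat 6), (Int.ofNat 2), (Int.ofNat 0), (Int.ofNat 0))) (.leaf ((Int.ofNat 4), (Int.ofNat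 0), (Int.ofNat 4), (Int.ofNat 0), (Int.negSucc 3), (Int.ofNat 0), (Int.negSucc 3), (Int.ofNat 0))))) (.node 609776153628399410614784 (.node 609776153628399410606592 (.leaf ((Int.ofNat 4), (Int.ofNat 0), (Int.ofNat 4), (Int.ofNat 0), (Int.negSucc 3), (Int.ofNat 0), (Int.ofNat 4), (Int.ofNat 0))) (.leaf ((Int.ofNat 4), (Int.ofNat 0), (Int.ofNat 4), (Int.ofNat 0), (Int.ofNat 4), (Int.ofNat 0), (Int.negSucc 3), (Int.ofNat 0)))) (.node 609776155882393952582142 (.leaf ((Int.ofNat 4), (Int.ofNat 0), (Int.ofNat 4), (Int.ofNat 0), (Int.ofNat 4), (Int.ofNat 0), (Int.ofNat 4), (Int.ofNat 0))) (.leaf ((Int.ofNat 4), (Int.ofNat 0), (Int.ofNat 6), (Int.ofNat 2), (Int.ofNat 0), (Int.ofNat 0), (Int.negSucc 1), (Int.negSucc 1))))))) (.node 612139638209235229608450 (.node 612139633705642046784000 (.node 609780760810813915660800 (.leaf ((Int.ofNat 4), (Int.ofNat 0), (Int.ofNat 6), (Int.ofNat 2), (Int.ofNat 0), (Int.ofNat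 0), (Int.ofNat 2), (Int.ofNat 2))) (.node 612139633705637747622400 (.leaf ((Int.ofNat 4), (Int.ofNat 4), (Int.ofNat 0), (Int.ofNat 0), (Int.ofNat 0), (Int.ofNat 0), (Int.ofNat 0), (Int.ofNat 0))) (.leaf ((Int.ofNat 6), (Int.ofNat 2), (Int.negSucc 3), (Int.ofNat 0), (Int.negSucc 1), (Int.negSucc 1), (Int.ofNat 0), (Int.ofNat 0))))) (.node 612139635955240687636992 (.node 612139635955240687628800 (.leaf ((Int.ofNat 6), (Int.ofNat 2), (Int.negSucc 3), (Int.ofNat 0), (Int.ofNat 2), (Int.ofNat 2), (Int.ofNat 0), (Int.ofNat 0))) (.leaf ((Int.ofNat 6), (Int.ofNat 2), (Int.negSucc 1), (Int.negSucc 1), (Int.ofNat 0), (Int.ofNat 0), (Int.negSucc 3), (Int.ofNat 0)))) (.node 612139638209235229604350 (.leaf ((Int.ofNat 6), (Int.ofNat 2), (Int.negSucc 1), (Int.negSucc 1), (Int.ofNat 0), (Int.ofNat 0), (Int.ofNat 4), (Int.ofNat 0))) (.leaf ((Int.ofNat 6), (Int.ofNat 2), (Int.ofNat 0), (Int.ofNat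 0), (Int.negSucc 3), (Int.ofNat 0), (Int.negSucc 1), (Int.negSucc 1)))))) (.node 612139640463238361518592 (.node 612139638209243819543042 (.node 612139638209243819538942 (.leaf ((Int.ofNat 6), (Int.ofNat 2), (Int.ofNat 0), (Int.ofNat 0), (Int.negSucc 3), (Int.ofNat 0), (Int.ofNat 2), (Int.ofNat 2))) (.leaf ((Int.ofNat 6), (Int.ofNat 2), (Int.ofNat 0), (Int.ofNat 0), (Int.ofNat 4), (Int.ofNat 0), (Int.negSucc 1), (Int.negSucc 1)))) (.node 612139640463238361510400 (.leaf ((Int.ofNat 6), (Int.ofNat 2), (Int.ofNat 0), (Int.ofNat 0), (Int.ofNat 4), (Int.ofNat 0), (Int.ofNat 2), (Int.ofNat 2))) (.leaf ((Int.ofNat 6), (Int.ofNat 2), (Int.ofNat 2), (Int.ofNat 2), (Int.ofNat 0), (Int.ofNat 0), (Int.negSucc 3), (Int.ofNat 0))))) (.node 612139642712841301524992 (.node 612139642712837002363392 (.leaf ((Int.ofNat 6), (Int.ofNat 2), (Int.ofNat 2), (Int.ofNat 2), (Int.ofNat 0), (Int.ofNat 0), (Int.ofNat 4), (Int.ofNat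 0))) (.leaf ((Int.ofNat 6), (Int.ofNat 2), (Int.ofNat 4), (Int.ofNat 0), (Int.negSucc 1), (Int.negSucc 1), (Int.ofNat 0), (Int.ofNat 0)))) (.node 614498515607665133486592 (.leaf ((Int.ofNat 6), (Int.ofNat 2), (Int.ofNat 4), (Int.ofNat 0), (Int.ofNat 2), (Int.ofNat 2), (Int.ofNat 0), (Int.ofNat 0))) (.leaf ((Int.ofNat 8), (Int.ofNat 0), (Int.ofNat 0), (Int.ofNat 0), (Int.ofNat 0), (Int.ofNat 0), (Int.ofNat 0), (Int.ofNat 0)))))))))))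
def HTRIE : VT := (.node 602690293557479661367808 (.node 600331416159058347420158 (.node 600331409401457733536258 (.node 597967927074616456509950 (.node 597967924820613324599808 (.node 597967922571010384593408 (.leaf ((Int.negSucc 7), (Int.ofNat 0), (Int.ofNat 0), (Int.ofNat 0), (Int.ofNat 0), (Int.ofNat 0), (Int.ofNat 0), (Int.ofNat 0))) (.node 597967922571014683755008 (.leaf ((Int.negSucc 5), (Int.negSucc 1), (Int.negSucc 3), (Int.ofNat 0), (Int.negSucc 1), (Int.negSucc 1), (Int.ofNat 0), (Int.ofNat 0))) (.leaf ((Int.negSucc 5), (Int.negSucc 1), (Int.negSucc 3), (Int.ofNat 0), (Int.ofNat 2), (Int.ofNat 2), (Int.ofNat 0), (Int.ofNat 0))))) (.node 597967927074607866575358 (.node 597967924820613324608000 (.leaf ((Int.negSucc 5), (Int.negSucc 1), (Int.negSucc 1), (Int.negSucc 1), (Int.ofNat 0), (Int.ofNat 0), (Int.negSucc 3), (Int.ofNat 0))) (.leaf ((Int.negSucc 5), (Int.negSucc 1), (Int.negSucc 1), (Int.negSucc 1), (Int.ofNat 0), (Int.ofNat 0), (Int.ofNat 4), (Int.ofNat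 0)))) (.node 597967927074607866579458 (.leaf ((Int.negSucc 5), (Int.negSucc 1), (Int.ofNat 0), (Int.ofNat 0), (Int.negSucc 3), (Int.ofNat 0), (Int.negSucc 1), (Int.negSucc 1))) (.leaf ((Int.negSucc 5), (Int.negSucc 1), (Int.ofNat 0), (Int.ofNat 0), (Int.negSucc 3), (Int.ofNat 0), (Int.ofNat 2), (Int.ofNat 2)))))) (.node 597967931578209639334400 (.node 597967929328610998481408 (.node 597967927074616456514050 (.leaf ((Int.negSucc 5), (Int.negSucc 1), (Int.ofNat 0), (Int.ofNat 0), (Int.ofNat 4), (Int.ofNat 0), (Int.negSucc 1), (Int.negSucc 1))) (.leaf ((Int.negSucc 5), (Int.negSucc 1), (Int.ofNat 0), (Int.ofNat 0), (Int.ofNat 4), (Int.ofNat 0), (Int.ofNat 2), (Int.ofNat 2)))) (.node 597967929328610998489600 (.leaf ((Int.negSucc 5), (Int.negSucc 1), (Int.ofNat 2), (Int.ofNat 2), (Int.ofNat 0), (Int.ofNat 0), (Int.negSucc 3), (Int.ofNat 0))) (.leaf ((Int.negSucc 5), (Int.negSucc 1), (Int.ofNat 2), (Int.ofNat 2), (Int.ofNat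 0), (Int.ofNat 0), (Int.ofNat 4), (Int.ofNat 0))))) (.node 600326804473037770457600 (.node 597967931578213938496000 (.leaf ((Int.negSucc 5), (Int.negSucc 1), (Int.ofNat 4), (Int.ofNat 0), (Int.negSucc 1), (Int.negSucc 1), (Int.ofNat 0), (Int.ofNat 0))) (.leaf ((Int.negSucc 5), (Int.negSucc 1), (Int.ofNat 4), (Int.ofNat 0), (Int.ofNat 2), (Int.ofNat 2), (Int.ofNat 0), (Int.ofNat 0)))) (.node 600331409401457733532158 (.leaf ((Int.negSucc 3), (Int.negSucc 3), (Int.ofNat 0), (Int.ofNat 0), (Int.ofNat 0), (Int.ofNat 0), (Int.ofNat 0), (Int.ofNat 0))) (.leaf ((Int.negSucc 3), (Int.ofNat 0), (Int.negSucc 5), (Int.negSucc 1), (Int.ofNat 0), (Int.ofNat 0), (Int.negSucc 1), (Int.negSucc 1))))))) (.node 600331413905059506291200 (.node 600331411655460865438208 (.node 600331411655452275503616 (.leaf ((Int.negSucc 3), (Int.ofNat 0), (Int.negSucc 5), (Int.negSucc 1), (Int.ofNat 0), (Int.ofNat 0), (Int.ofNat 2), (Int.ofNat 2))) (.node 600331411655452275511808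 (.leaf ((Int.negSucc 3), (Int.ofNat 0), (Int.negSucc 3), (Int.ofNat 0), (Int.negSucc 3), (Int.ofNat 0), (Int.negSucc 3), (Int.ofNat 0))) (.leaf ((Int.negSucc 3), (Int.ofNat 0), (Int.negSucc 3), (Int.ofNat 0), (Int.negSucc 3), (Int.ofNat 0), (Int.ofNat 4), (Int.ofNat 0))))) (.node 600331413905050916356608 (.node 600331411655460865446400 (.leaf ((Int.negSucc 3), (Int.ofNat 0), (Int.negSucc 3), (Int.ofNat 0), (Int.ofNat 4), (Int.ofNat 0), (Int.negSucc 3), (Int.ofNat 0))) (.leaf ((Int.negSucc 3), (Int.ofNat 0), (Int.negSucc 3), (Int.ofNat 0), (Int.ofNat 4), (Int.ofNat 0), (Int.ofNat 4), (Int.ofNat 0)))) (.node 600331413905055215518208 (.leaf ((Int.negSucc 3), (Int.ofNat 0), (Int.negSucc 1), (Int.negSucc 1), (Int.negSucc 5), (Int.negSucc 1), (Int.ofNat 0), (Int.ofNat 0))) (.leaf ((Int.negSucc 3), (Int.ofNat 0), (Int.negSucc 1), (Int.negSucc 1), (Int.negSucc 1), (Int.ofNat 2), (Int.ofNat 0),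 (Int.ofNat 0)))))) (.node 600331416159054048258558 (.node 600331413909455407413758 (.node 600331413905063805452800 (.leaf ((Int.negSucc 3), (Int.ofNat 0), (Int.negSucc 1), (Int.negSucc 1), (Int.ofNat 2), (Int.negSucc 1), (Int.ofNat 0), (Int.ofNat 0))) (.leaf ((Int.negSucc 3), (Int.ofNat 0), (Int.negSucc 1), (Int.negSucc 1), (Int.ofNat 6), (Int.ofNat 2), (Int.ofNat 0), (Int.ofNat 0)))) (.node 600331413909455407417858 (.leaf ((Int.negSucc 3), (Int.ofNat 0), (Int.negSucc 1), (Int.ofNat 2), (Int.ofNat 0), (Int.ofNat 0), (Int.negSucc 1), (Int.negSucc 1))) (.leaf ((Int.negSucc 3), (Int.ofNat 0), (Int.negSucc 1), (Int.ofNat 2), (Int.ofNat 0), (Int.ofNat 0), (Int.ofNat 2), (Int.ofNat 2))))) (.node 600331416159054048266750 (.node 600331416159054048262658 (.leaf ((Int.negSucc 3), (Int.ofNat 0), (Int.ofNat 0), (Int.ofNat 0), (Int.negSucc 1), (Int.negSucc 1), (Int.negSucc 5), (Int.negSucc 1))) (.leaf ((Int.negSucc 3), (Int.ofNat 0), (Int.ofNat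 0), (Int.ofNat 0), (Int.negSucc 1), (Int.negSucc 1), (Int.negSucc 1), (Int.ofNat 2)))) (.node 600331416159054048270850 (.leaf ((Int.negSucc 3), (Int.ofNat 0), (Int.ofNat 0), (Int.ofNat 0), (Int.negSucc 1), (Int.negSucc 1), (Int.ofNat 2), (Int.negSucc 1))) (.leaf ((Int.negSucc 3), (Int.ofNat 0), (Int.ofNat 0), (Int.ofNat 0), (Int.negSucc 1), (Int.negSucc 1), (Int.ofNat 6), (Int.ofNat 2)))))))) (.node 600331422916654662158850 (.node 600331418413052889399808 (.node 600331416159058347432450 (.node 600331416159058347424258 (.leaf ((Int.negSucc 3), (Int.ofNat 0), (Int.ofNat 0), (Int.ofNat 0), (Int.ofNat 2), (Int.ofNat 2), (Int.negSucc 5), (Int.negSucc 1))) (.node 600331416159058347428350 (.leaf ((Int.negSucc 3), (Int.ofNat 0), (Int.ofNat 0), (Int.ofNat 0), (Int.ofNat 2), (Int.ofNat 2), (Int.negSucc 1), (Int.ofNat 2))) (.leaf ((Int.negSucc 3), (Int.ofNat 0), (Int.ofNat 0), (Int.ofNat 0), (Int.ofNat 2), (Int.ofNat 2), (Int.ofNat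 2), (Int.negSucc 1))))) (.node 600331418408656988277250 (.node 600331418408656988273150 (.leaf ((Int.negSucc 3), (Int.ofNat 0), (Int.ofNat 0), (Int.ofNat 0), (Int.ofNat 2), (Int.ofNat 2), (Int.ofNat 6), (Int.ofNat 2))) (.leaf ((Int.negSucc 3), (Int.ofNat 0), (Int.ofNat 2), (Int.negSucc 1), (Int.ofNat 0), (Int.ofNat 0), (Int.negSucc 1), (Int.negSucc 1)))) (.node 600331418413048590238208 (.leaf ((Int.negSucc 3), (Int.ofNat 0), (Int.ofNat 2), (Int.negSucc 1), (Int.ofNat 0), (Int.ofNat 0), (Int.ofNat 2), (Int.ofNat 2))) (.leaf ((Int.negSucc 3), (Int.ofNat 0), (Int.ofNat 2), (Int.ofNat 2), (Int.negSucc 5), (Int.negSucc 1), (Int.ofNat 0), (Int.ofNat 0)))))) (.node 600331420662651530252800 (.node 600331418413061479334400 (.node 600331418413057180172800 (.leaf ((Int.negSucc 3), (Int.ofNat 0), (Int.ofNat 2), (Int.ofNat 2), (Int.negSucc 1), (Int.ofNat 2), (Int.ofNat 0), (Int.ofNat 0))) (.leaf ((Int.negSucc 3), (Int.ofNat 0),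 (Int.ofNat 2), (Int.ofNat 2), (Int.ofNat 2), (Int.negSucc 1), (Int.ofNat 0), (Int.ofNat 0)))) (.node 600331420662651530244608 (.leaf ((Int.negSucc 3), (Int.ofNat 0), (Int.ofNat 2), (Int.ofNat 2), (Int.ofNat 6), (Int.ofNat 2), (Int.ofNat 0), (Int.ofNat 0))) (.leaf ((Int.negSucc 3), (Int.ofNat 0), (Int.ofNat 4), (Int.ofNat 0), (Int.negSucc 3), (Int.ofNat 0), (Int.negSucc 3), (Int.ofNat 0))))) (.node 600331420662660120187392 (.node 600331420662660120179200 (.leaf ((Int.negSucc 3), (Int.ofNat 0), (Int.ofNat 4), (Int.ofNat 0), (Int.negSucc 3), (Int.ofNat 0), (Int.ofNat 4), (Int.ofNat 0))) (.leaf ((Int.negSucc 3), (Int.ofNat 0), (Int.ofNat 4), (Int.ofNat 0), (Int.ofNat 4), (Int.ofNat 0), (Int.negSucc 3), (Int.ofNat 0)))) (.node 600331422916654662154750 (.leaf ((Int.negSucc 3), (Int.ofNat 0), (Int.ofNat 4), (Int.ofNat 0), (Int.ofNat 4), (Int.ofNat 0), (Int.ofNat 4), (Int.ofNat 0))) (.leaf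 ((Int.negSucc 3), (Int.ofNat 0), (Int.ofNat 6), (Int.ofNat 2), (Int.ofNat 0), (Int.ofNat 0), (Int.negSucc 1), (Int.negSucc 1))))))) (.node 602690291303480820234750 (.node 602690289053882179381758 (.node 602690286799879047479808 (.leaf ((Int.negSucc 3), (Int.ofNat 0), (Int.ofNat 6), (Int.ofNat 2), (Int.ofNat 0), (Int.ofNat 0), (Int.ofNat 2), (Int.ofNat 2))) (.node 602690286799887637414400 (.leaf ((Int.negSucc 1), (Int.negSucc 1), (Int.negSucc 5), (Int.negSucc 1), (Int.negSucc 3), (Int.ofNat 0), (Int.ofNat 0), (Int.ofNat 0))) (.leaf ((Int.negSucc 1), (Int.negSucc 1), (Int.negSucc 5), (Int.negSucc 1), (Int.ofNat 4), (Int.ofNat 0), (Int.ofNat 0), (Int.ofNat 0))))) (.node 602690289053882179389950 (.node 602690289053882179385858 (.leaf ((Int.negSucc 1), (Int.negSucc 1), (Int.negSucc 3), (Int.ofNat 0), (Int.ofNat 0), (Int.ofNat 0), (Int.negSucc 5), (Int.negSucc 1))) (.leaf ((Int.negSucc 1), (Int.negSucc 1), (Int.negSucc 3), (Int.ofNat 0),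 (Int.ofNat 0), (Int.ofNat 0), (Int.negSucc 1), (Int.ofNat 2)))) (.node 602690289053882179394050 (.leaf ((Int.negSucc 1), (Int.negSucc 1), (Int.negSucc 3), (Int.ofNat 0), (Int.ofNat 0), (Int.ofNat 0), (Int.ofNat 2), (Int.negSucc 1))) (.leaf ((Int.negSucc 1), (Int.negSucc 1), (Int.negSucc 3), (Int.ofNat 0), (Int.ofNat 0), (Int.ofNat 0), (Int.ofNat 6), (Int.ofNat 2)))))) (.node 602690291307876721361408 (.node 602690291303485119396350 (.node 602690291303480820238850 (.leaf ((Int.negSucc 1), (Int.negSucc 1), (Int.negSucc 1), (Int.negSucc 1), (Int.negSucc 1), (Int.negSucc 1), (Int.negSucc 1), (Int.negSucc 1))) (.leaf ((Int.negSucc 1), (Int.negSucc 1), (Int.negSucc 1), (Int.negSucc 1), (Int.negSucc 1), (Int.negSucc 1), (Int.ofNat 2), (Int.ofNat 2)))) (.node 602690291303485119400450 (.leaf ((Int.negSucc 1), (Int.negSucc 1), (Int.negSucc 1), (Int.negSucc 1), (Int.ofNat 2), (Int.ofNat 2), (Int.negSucc 1), (Int.negSucc 1))) (.leaf ((Int.negSucc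 1), (Int.negSucc 1), (Int.negSucc 1), (Int.negSucc 1), (Int.ofNat 2), (Int.ofNat 2), (Int.ofNat 2), (Int.ofNat 2))))) (.node 602690293557475362206208 (.node 602690291307885311296000 (.leaf ((Int.negSucc 1), (Int.negSucc 1), (Int.negSucc 1), (Int.ofNat 2), (Int.negSucc 3), (Int.ofNat 0), (Int.ofNat 0), (Int.ofNat 0))) (.leaf ((Int.negSucc 1), (Int.negSucc 1), (Int.negSucc 1), (Int.ofNat 2), (Int.ofNat 4), (Int.ofNat 0), (Int.ofNat 0), (Int.ofNat 0)))) (.node 602690293557475362214400 (.leaf ((Int.negSucc 1), (Int.negSucc 1), (Int.ofNat 0), (Int.ofNat 0), (Int.negSucc 5), (Int.negSucc 1), (Int.negSucc 3), (Int.ofNat 0))) (.leaf ((Int.negSucc 1), (Int.negSucc 1), (Int.ofNat 0), (Int.ofNat 0), (Int.negSucc 5), (Int.negSucc 1), (Int.ofNat 4), (Int.ofNat 0))))))))) (.node 605053773634726588318208 (.node 602690298061081434135042 (.node 602690295807086892155392 (.node 602690293557483952148992 (.node 602690293557479661376000 (.leaf ((Int.negSucc 1), (Int.negSucc 1), (Int.ofNat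 0), (Int.ofNat 0), (Int.negSucc 1), (Int.ofNat 2), (Int.negSucc 3), (Int.ofNat 0))) (.node 602690293557483952140800 (.leaf ((Int.negSucc 1), (Int.negSucc 1), (Int.ofNat 0), (Int.ofNat 0), (Int.negSucc 1), (Int.ofNat 2), (Int.ofNat 4), (Int.ofNat 0))) (.leaf ((Int.negSucc 1), (Int.negSucc 1), (Int.ofNat 0), (Int.ofNat 0), (Int.ofNat 2), (Int.negSucc 1), (Int.negSucc 3), (Int.ofNat 0))))) (.node 602690293557488251310592 (.node 602690293557488251302400 (.leaf ((Int.negSucc 1), (Int.negSucc 1), (Int.ofNat 0), (Int.ofNat 0), (Int.ofNat 2), (Int.negSucc 1), (Int.ofNat 4), (Int.ofNat 0))) (.leaf ((Int.negSucc 1), (Int.negSucc 1), (Int.ofNat 0), (Int.ofNat 0), (Int.ofNat 6), (Int.ofNat 2), (Int.negSucc 3), (Int.ofNat 0)))) (.node 602690295807078302220800 (.leaf ((Int.negSucc 1), (Int.negSucc 1), (Int.ofNat 0), (Int.ofNat 0), (Int.ofNat 6), (Int.ofNat 2), (Int.ofNat 4), (Int.ofNat 0))) (.leaf ((Int.negSucc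 1), (Int.negSucc 1), (Int.ofNat 2), (Int.negSucc 1), (Int.negSucc 3), (Int.ofNat 0), (Int.ofNat 0), (Int.ofNat 0)))))) (.node 602690295811482793282050 (.node 602690295811478494120450 (.node 602690295811478494116350 (.leaf ((Int.negSucc 1), (Int.negSucc 1), (Int.ofNat 2), (Int.negSucc 1), (Int.ofNat 4), (Int.ofNat 0), (Int.ofNat 0), (Int.ofNat 0))) (.leaf ((Int.negSucc 1), (Int.negSucc 1), (Int.ofNat 2), (Int.ofNat 2), (Int.negSucc 1), (Int.negSucc 1), (Int.negSucc 1), (Int.negSucc 1)))) (.node 602690295811482793277950 (.leaf ((Int.negSucc 1), (Int.negSucc 1), (Int.ofNat 2), (Int.ofNat 2), (Int.negSucc 1), (Int.negSucc 1), (Int.ofNat 2), (Int.ofNat 2))) (.leaf ((Int.negSucc 1), (Int.negSucc 1), (Int.ofNat 2), (Int.ofNat 2), (Int.ofNat 2), (Int.ofNat 2), (Int.negSucc 1), (Int.negSucc 1))))) (.node 602690298061081434126850 (.node 602690298061081434122750 (.leaf ((Int.negSucc 1), (Int.negSucc 1), (Int.ofNat 2), (Int.ofNat 2), (Int.ofNat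 2), (Int.ofNat 2), (Int.ofNat 2), (Int.ofNat 2))) (.leaf ((Int.negSucc 1), (Int.negSucc 1), (Int.ofNat 4), (Int.ofNat 0), (Int.ofNat 0), (Int.ofNat 0), (Int.negSucc 5), (Int.negSucc 1)))) (.node 602690298061081434130942 (.leaf ((Int.negSucc 1), (Int.negSucc 1), (Int.ofNat 4), (Int.ofNat 0), (Int.ofNat 0), (Int.ofNat 0), (Int.negSucc 1), (Int.ofNat 2))) (.leaf ((Int.negSucc 1), (Int.negSucc 1), (Int.ofNat 4), (Int.ofNat 0), (Int.ofNat 0), (Int.ofNat 0), (Int.ofNat 2), (Int.negSucc 1))))))) (.node 602694905243495939176958 (.node 602694900739898457195008 (.node 602690300315075976102400 (.leaf ((Int.negSucc 1), (Int.negSucc 1), (Int.ofNat 4), (Int.ofNat 0), (Int.ofNat 0), (Int.ofNat 0), (Int.ofNat 6), (Int.ofNat 2))) (.node 602690300315084566036992 (.leaf ((Int.negSucc 1), (Int.negSucc 1), (Int.ofNat 6), (Int.ofNat 2), (Int.negSucc 3), (Int.ofNat 0), (Int.ofNat 0), (Int.ofNat 0))) (.leaf ((Int.negSucc 1), (Int.negSucc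 1), (Int.ofNat 6), (Int.ofNat 2), (Int.ofNat 4), (Int.ofNat 0), (Int.ofNat 0), (Int.ofNat 0))))) (.node 602694902989501397201408 (.node 602694900739902756356608 (.leaf ((Int.negSucc 1), (Int.ofNat 2), (Int.negSucc 3), (Int.ofNat 0), (Int.negSucc 1), (Int.negSucc 1), (Int.ofNat 0), (Int.ofNat 0))) (.leaf ((Int.negSucc 1), (Int.ofNat 2), (Int.negSucc 3), (Int.ofNat 0), (Int.ofNat 2), (Int.ofNat 2), (Int.ofNat 0), (Int.ofNat 0)))) (.node 602694902989501397209600 (.leaf ((Int.negSucc 1), (Int.ofNat 2), (Int.negSucc 1), (Int.negSucc 1), (Int.ofNat 0), (Int.ofNat 0), (Int.negSucc 3), (Int.ofNat 0))) (.leaf ((Int.negSucc 1), (Int.ofNat 2), (Int.negSucc 1), (Int.negSucc 1), (Int.ofNat 0), (Int.ofNat 0), (Int.ofNat 4), (Int.ofNat 0)))))) (.node 602694907497499071083008 (.node 602694905243504529111550 (.node 602694905243495939181058 (.leaf ((Int.negSucc 1), (Int.ofNat 2), (Int.ofNat 0), (Int.ofNat 0), (Int.negSucc 3), (Int.ofNat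 0), (Int.negSucc 1), (Int.negSucc 1))) (.leaf ((Int.negSucc 1), (Int.ofNat 2), (Int.ofNat 0), (Int.ofNat 0), (Int.negSucc 3), (Int.ofNat 0), (Int.ofNat 2), (Int.ofNat 2)))) (.node 602694905243504529115650 (.leaf ((Int.negSucc 1), (Int.ofNat 2), (Int.ofNat 0), (Int.ofNat 0), (Int.ofNat 4), (Int.ofNat 0), (Int.negSucc 1), (Int.negSucc 1))) (.leaf ((Int.negSucc 1), (Int.ofNat 2), (Int.ofNat 0), (Int.ofNat 0), (Int.ofNat 4), (Int.ofNat 0), (Int.ofNat 2), (Int.ofNat 2))))) (.node 602694909747097711936000 (.node 602694907497499071091200 (.leaf ((Int.negSucc 1), (Int.ofNat 2), (Int.ofNat 2), (Int.ofNat 2), (Int.ofNat 0), (Int.ofNat 0), (Int.negSucc 3), (Int.ofNat 0))) (.leaf ((Int.negSucc 1), (Int.ofNat 2), (Int.ofNat 2), (Int.ofNat 2), (Int.ofNat 0), (Int.ofNat 0), (Int.ofNat 4), (Int.ofNat 0)))) (.node 602694909747102011097600 (.leaf ((Int.negSucc 1), (Int.ofNat 2), (Int.ofNat 4), (Int.ofNat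 0), (Int.negSucc 1), (Int.negSucc 1), (Int.ofNat 0), (Int.ofNat 0))) (.leaf ((Int.negSucc 1), (Int.ofNat 2), (Int.ofNat 4), (Int.ofNat 0), (Int.ofNat 2), (Int.ofNat 2), (Int.ofNat 0), (Int.ofNat 0)))))))) (.node 605053780387922711149058 (.node 605053778138319771142658 (.node 605053775884329528324608 (.node 605053775884325229163008 (.leaf ((Int.ofNat 0), (Int.ofNat 0), (Int.negSucc 7), (Int.ofNat 0), (Int.ofNat 0), (Int.ofNat 0), (Int.ofNat 0), (Int.ofNat 0))) (.node 605053775884325229171200 (.leaf ((Int.ofNat 0), (Int.ofNat 0), (Int.negSucc 5), (Int.negSucc 1), (Int.negSucc 1), (Int.negSucc 1), (Int.negSucc 3), (Int.ofNat 0))) (.leaf ((Int.ofNat 0), (Int.ofNat 0), (Int.negSucc 5), (Int.negSucc 1), (Int.negSucc 1), (Int.negSucc 1), (Int.ofNat 4), (Int.ofNat 0))))) (.node 605053778133928169177600 (.node 605053775884329528332800 (.leaf ((Int.ofNat 0), (Int.ofNat 0), (Int.negSucc 5), (Int.negSucc 1), (Int.ofNat 2), (Int.ofNat 2), (Int.negSucc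 3), (Int.ofNat 0))) (.leaf ((Int.ofNat 0), (Int.ofNat 0), (Int.negSucc 5), (Int.negSucc 1), (Int.ofNat 2), (Int.ofNat 2), (Int.ofNat 4), (Int.ofNat 0)))) (.node 605053778138319771138558 (.leaf ((Int.ofNat 0), (Int.ofNat 0), (Int.negSucc 3), (Int.negSucc 3), (Int.ofNat 0), (Int.ofNat 0), (Int.ofNat 0), (Int.ofNat 0))) (.leaf ((Int.ofNat 0), (Int.ofNat 0), (Int.negSucc 3), (Int.ofNat 0), (Int.negSucc 5), (Int.negSucc 1), (Int.negSucc 1), (Int.negSucc 1)))))) (.node 605053778138328361077250 (.node 605053778138324070304258 (.node 605053778138324070300158 (.leaf ((Int.ofNat 0), (Int.ofNat 0), (Int.negSucc 3), (Int.ofNat 0), (Int.negSucc 5), (Int.negSucc 1), (Int.ofNat 2), (Int.ofNat 2))) (.leaf ((Int.ofNat 0), (Int.ofNat 0), (Int.negSucc 3), (Int.ofNat 0), (Int.negSucc 1), (Int.ofNat 2), (Int.negSucc 1), (Int.negSucc 1)))) (.node 605053778138328361073150 (.leaf ((Int.ofNat 0), (Int.ofNat 0), (Int.negSucc 3), (Int.ofNat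 0), (Int.negSucc 1), (Int.ofNat 2), (Int.ofNat 2), (Int.ofNat 2))) (.leaf ((Int.ofNat 0), (Int.ofNat 0), (Int.negSucc 3), (Int.ofNat 0), (Int.ofNat 2), (Int.negSucc 1), (Int.negSucc 1), (Int.negSucc 1))))) (.node 605053778138332660238850 (.node 605053778138332660234750 (.leaf ((Int.ofNat 0), (Int.ofNat 0), (Int.negSucc 3), (Int.ofNat 0), (Int.ofNat 2), (Int.negSucc 1), (Int.ofNat 2), (Int.ofNat 2))) (.leaf ((Int.ofNat 0), (Int.ofNat 0), (Int.negSucc 3), (Int.ofNat 0), (Int.ofNat 6), (Int.ofNat 2), (Int.negSucc 1), (Int.negSucc 1)))) (.node 605053780387922711144958 (.leaf ((Int.ofNat 0), (Int.ofNat 0), (Int.negSucc 3), (Int.ofNat 0), (Int.ofNat 6), (Int.ofNat 2), (Int.ofNat 2), (Int.ofNat 2))) (.leaf ((Int.ofNat 0), (Int.ofNat 0), (Int.negSucc 1), (Int.negSucc 1), (Int.negSucc 3), (Int.ofNat 0), (Int.negSucc 5), (Int.negSucc 1))))))) (.node 605053780392322903044608 (.node 605053780387931301079550 (.node 605053780387922711153150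 (.leaf ((Int.ofNat 0), (Int.ofNat 0), (Int.negSucc 1), (Int.negSucc 1), (Int.negSucc 3), (Int.ofNat 0), (Int.negSucc 1), (Int.ofNat 2))) (.node 605053780387922711157250 (.leaf ((Int.ofNat 0), (Int.ofNat 0), (Int.negSucc 1), (Int.negSucc 1), (Int.negSucc 3), (Int.ofNat 0), (Int.ofNat 2), (Int.negSucc 1))) (.leaf ((Int.ofNat 0), (Int.ofNat 0), (Int.negSucc 1), (Int.negSucc 1), (Int.negSucc 3), (Int.ofNat 0), (Int.ofNat 6), (Int.ofNat 2))))) (.node 605053780387931301087742 (.node 605053780387931301083650 (.leaf ((Int.ofNat 0), (Int.ofNat 0), (Int.negSucc 1), (Int.negSucc 1), (Int.ofNat 4), (Int.ofNat 0), (Int.negSucc 5), (Int.negSucc 1))) (.leaf ((Int.ofNat 0), (Int.ofNat 0), (Int.negSucc 1), (Int.negSucc 1), (Int.ofNat 4), (Int.ofNat 0), (Int.negSucc 1), (Int.ofNat 2)))) (.node 605053780387931301091842 (.leaf ((Int.ofNat 0), (Int.ofNat 0), (Int.negSucc 1), (Int.negSucc 1), (Int.ofNat 4), (Int.ofNat 0),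 (Int.ofNat 2), (Int.negSucc 1))) (.leaf ((Int.ofNat 0), (Int.ofNat 0), (Int.negSucc 1), (Int.negSucc 1), (Int.ofNat 4), (Int.ofNat 0), (Int.ofNat 6), (Int.ofNat 2)))))) (.node 605053782641917253124608 (.node 605053780392327202206208 (.node 605053780392322903052800 (.leaf ((Int.ofNat 0), (Int.ofNat 0), (Int.negSucc 1), (Int.ofNat 2), (Int.negSucc 1), (Int.negSucc 1), (Int.negSucc 3), (Int.ofNat 0))) (.leaf ((Int.ofNat 0), (Int.ofNat 0), (Int.negSucc 1), (Int.ofNat 2), (Int.negSucc 1), (Int.negSucc 1), (Int.ofNat 4), (Int.ofNat 0)))) (.node 605053780392327202214400 (.leaf ((Int.ofNat 0), (Int.ofNat 0), (Int.negSucc 1), (Int.ofNat 2), (Int.ofNat 2), (Int.ofNat 2), (Int.negSucc 3), (Int.ofNat 0))) (.leaf ((Int.ofNat 0), (Int.ofNat 0), (Int.negSucc 1), (Int.ofNat 2), (Int.ofNat 2), (Int.ofNat 2), (Int.ofNat 4), (Int.ofNat 0))))) (.node 605053782641925843051008 (.node 605053782641921543897600 (.leaf ((Int.ofNat 0), (Int.ofNat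 0), (Int.ofNat 0), (Int.ofNat 0), (Int.negSucc 7), (Int.ofNat 0), (Int.ofNat 0), (Int.ofNat 0))) (.leaf ((Int.ofNat 0), (Int.ofNat 0), (Int.ofNat 0), (Int.ofNat 0), (Int.negSucc 3), (Int.negSucc 3), (Int.ofNat 0), (Int.ofNat 0)))) (.node 605053782641925843055100 (.leaf ((Int.ofNat 0), (Int.ofNat 0), (Int.ofNat 0), (Int.ofNat 0), (Int.ofNat 0), (Int.ofNat 0), (Int.negSucc 7), (Int.ofNat 0))) (.leaf ((Int.ofNat 0), (Int.ofNat 0), (Int.ofNat 0), (Int.ofNat 0), (Int.ofNat 0), (Int.ofNat 0), (Int.negSucc 3), (Int.negSucc 3))))))))))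
def witList : List PAR := [
(false, Sum.inl (false, (0:Fin 4))),
(true, Sum.inr (Sum.inr ((Equiv.swap (0:Fin 4) 3 * Equiv.swap (1:Fin 4) 2), ![false,true,false,true]))),
(true, Sum.inr (Sum.inr ((Equiv.swap (0:Fin 4) 3 * Equiv.swap (1:Fin 4) 2), ![false,true,true,true]))),
(true, Sum.inr (Sum.inr ((Equiv.swap (0:Fin 4) 2 * Equiv.swap (0:Fin 4) 3), ![false,false,true,true]))),
(true, Sum.inr (Sum.inr ((Equiv.swap (0:Fin 4) 2 * Equiv.swap (0:Fin 4) 3), ![false,false,true,false]))),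
(true, Sum.inr (Sum.inr ((Equiv.swap (0:Fin 4) 1 * Equiv.swap (0:Fin 4) 3), ![false,true,true,false]))),
(true, Sum.inr (Sum.inr ((Equiv.swap (0:Fin 4) 1 * Equiv.swap (0:Fin 4) 3), ![false,true,true,true]))),
(true, Sum.inr (Sum.inr ((Equiv.swap (0:Fin 4) 1 * Equiv.swap (0:Fin 4) 3), ![false,true,false,false]))),
(true, Sum.inr (Sum.inr ((Equiv.swap (0:Fin 4) 1 * Equiv.swap (0:Fin 4) 3), ![false,true,false,true]))),
(true, Sum.inr (Sum.inr ((Equiv.swap (0:Fin 4) 2 * Equiv.swap (0:Fin 4) 3), ![false,true,true,true]))),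
(true, Sum.inr (Sum.inr ((Equiv.swap (0:Fin 4) 2 * Equiv.swap (0:Fin 4) 3), ![false,true,true,false]))),
(true, Sum.inr (Sum.inr ((Equiv.swap (0:Fin 4) 3 * Equiv.swap (1:Fin 4) 2), ![false,false,false,true]))),
(true, Sum.inr (Sum.inr ((Equiv.swap (0:Fin 4) 3 * Equiv.swap (1:Fin 4) 2), ![false,false,true,true]))),
(true, Sum.inl (false, (0:Fin 4))),
(true, Sum.inr (Sum.inr ((Equiv.swap (0:Fin 4) 2 * Equiv.swap (1:Fin 4) 3), ![true,false,true,false]))),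
(true, Sum.inr (Sum.inr ((Equiv.swap (0:Fin 4) 2 * Equiv.swap (1:Fin 4) 3), ![true,false,true,true]))),
(false, Sum.inr (Sum.inl ![false,false,false,false])),
(false, Sum.inr (Sum.inl ![false,false,false,true])),
(false, Sum.inr (Sum.inl ![false,false,true,false])),
(false, Sum.inr (Sum.inl ![false,false,true,true])),
(true, Sum.inr (Sum.inr ((Equiv.swap (0:Fin 4) 2 * Equiv.swap (2:Fin 4) 3), ![true,false,false,true]))),
(false, Sum.inr (Sum.inr ((Equiv.swap (0:Fin 4) 1 * Equiv.swap (1:Fin 4) 3), ![false,false,false,true]))),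
(false, Sum.inr (Sum.inr ((Equiv.swap (0:Fin 4) 1 * Equiv.swap (1:Fin 4) 3), ![false,false,true,true]))),
(true, Sum.inr (Sum.inr ((Equiv.swap (0:Fin 4) 2 * Equiv.swap (2:Fin 4) 3), ![true,false,true,true]))),
(false, Sum.inr (Sum.inr ((Equiv.swap (0:Fin 4) 1 * Equiv.swap (1:Fin 4) 2), ![false,false,true,false]))),
(false, Sum.inr (Sum.inr ((Equiv.swap (0:Fin 4) 1 * Equiv.swap (1:Fin 4) 2), ![false,false,true,true]))),
(true, Sum.inr (Sum.inr ((Equiv.swap (0:Fin 4) 1 * Equiv.swap (0:Fin 4) 2), ![true,true,false,false]))),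
(false, Sum.inr (Sum.inr ((Equiv.swap (0:Fin 4) 1 * Equiv.swap (2:Fin 4) 3), ![false,true,false,false]))),
(false, Sum.inr (Sum.inr ((Equiv.swap (0:Fin 4) 1 * Equiv.swap (2:Fin 4) 3), ![false,true,false,true]))),
(true, Sum.inr (Sum.inr ((Equiv.swap (0:Fin 4) 1 * Equiv.swap (0:Fin 4) 2), ![true,true,false,true]))),
(true, Sum.inr (Sum.inr ((Equiv.swap (0:Fin 4) 1 * Equiv.swap (0:Fin 4) 2), ![true,true,true,false]))),
(false, Sum.inr (Sum.inr ((Equiv.swap (0:Fin 4) 1 * Equiv.swap (2:Fin 4) 3), ![false,true,true,false]))),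
(false, Sum.inr (Sum.inr ((Equiv.swap (0:Fin 4) 1 * Equiv.swap (2:Fin 4) 3), ![false,true,true,true]))),
(true, Sum.inr (Sum.inr ((Equiv.swap (0:Fin 4) 1 * Equiv.swap (0:Fin 4) 2), ![true,true,true,true]))),
(false, Sum.inr (Sum.inr ((Equiv.swap (0:Fin 4) 1 * Equiv.swap (1:Fin 4) 2), ![false,true,true,false]))),
(false, Sum.inr (Sum.inr ((Equiv.swap (0:Fin 4) 1 * Equiv.swap (1:Fin 4) 2), ![false,true,true,true]))),
(true, Sum.inr (Sum.inr ((Equiv.swap (0:Fin 4) 2 * Equiv.swap (2:Fin 4) 3), ![true,true,false,true]))),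
(false, Sum.inr (Sum.inr ((Equiv.swap (0:Fin 4) 1 * Equiv.swap (1:Fin 4) 3), ![false,true,false,true]))),
(false, Sum.inr (Sum.inr ((Equiv.swap (0:Fin 4) 1 * Equiv.swap (1:Fin 4) 3), ![false,true,true,true]))),
(true, Sum.inr (Sum.inr ((Equiv.swap (0:Fin 4) 2 * Equiv.swap (2:Fin 4) 3), ![true,true,true,true]))),
(false, Sum.inr (Sum.inl ![false,true,false,false])),
(false, Sum.inr (Sum.inl ![false,true,false,true])),
(false, Sum.inr (Sum.inl ![false,true,true,false])),
(false, Sum.inr (Sum.inl ![false,true,true,true])),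
(true, Sum.inr (Sum.inr ((Equiv.swap (0:Fin 4) 2 * Equiv.swap (1:Fin 4) 3), ![true,true,true,false]))),
(true, Sum.inr (Sum.inr ((Equiv.swap (0:Fin 4) 2 * Equiv.swap (1:Fin 4) 3), ![true,true,true,true]))),
(true, Sum.inr (Sum.inr ((Equiv.swap (0:Fin 4) 1 * Equiv.swap (1:Fin 4) 3), ![false,false,true,true]))),
(true, Sum.inr (Sum.inr ((Equiv.swap (0:Fin 4) 1 * Equiv.swap (1:Fin 4) 3), ![false,false,false,true]))),
(true, Sum.inr (Sum.inr ((Equiv.swap (0:Fin 4) 1 * Equiv.swap (1:Fin 4) 2), ![false,true,true,false]))),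
(false, Sum.inr (Sum.inr ((Equiv.swap (0:Fin 4) 2 * Equiv.swap (0:Fin 4) 3), ![false,false,true,false]))),
(false, Sum.inr (Sum.inr ((Equiv.swap (0:Fin 4) 2 * Equiv.swap (0:Fin 4) 3), ![false,false,true,true]))),
(true, Sum.inr (Sum.inr ((Equiv.swap (0:Fin 4) 1 * Equiv.swap (1:Fin 4) 2), ![false,true,true,true]))),
(true, Sum.inr (Sum.inl ![false,false,false,false])),
(true, Sum.inr (Sum.inl ![false,false,false,true])),
(true, Sum.inr (Sum.inl ![false,false,true,false])),
(true, Sum.inr (Sum.inl ![false,false,true,true])),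
(false, Sum.inr (Sum.inr ((Equiv.swap (0:Fin 4) 3 * Equiv.swap (1:Fin 4) 2), ![false,false,false,true]))),
(false, Sum.inr (Sum.inr ((Equiv.swap (0:Fin 4) 3 * Equiv.swap (1:Fin 4) 2), ![false,false,true,true]))),
(true, Sum.inr (Sum.inr ((Equiv.swap (0:Fin 4) 1 * Equiv.swap (2:Fin 4) 3), ![false,true,false,true]))),
(true, Sum.inr (Sum.inr ((Equiv.swap (0:Fin 4) 1 * Equiv.swap (2:Fin 4) 3), ![false,true,false,false]))),
(false, Sum.inr (Sum.inr ((Equiv.swap (0:Fin 4) 1 * Equiv.swap (0:Fin 4) 3), ![false,true,false,false]))),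
(false, Sum.inr (Sum.inr ((Equiv.swap (0:Fin 4) 1 * Equiv.swap (0:Fin 4) 3), ![false,true,false,true]))),
(false, Sum.inr (Sum.inr ((Equiv.swap (0:Fin 4) 1 * Equiv.swap (0:Fin 4) 3), ![false,true,true,false]))),
(false, Sum.inr (Sum.inr ((Equiv.swap (0:Fin 4) 1 * Equiv.swap (0:Fin 4) 3), ![false,true,true,true]))),
(true, Sum.inr (Sum.inr ((Equiv.swap (0:Fin 4) 1 * Equiv.swap (2:Fin 4) 3), ![false,true,true,true]))),
(true, Sum.inr (Sum.inr ((Equiv.swap (0:Fin 4) 1 * Equiv.swap (2:Fin 4) 3), ![false,true,true,false]))),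
(false, Sum.inr (Sum.inr ((Equiv.swap (0:Fin 4) 3 * Equiv.swap (1:Fin 4) 2), ![false,true,false,true]))),
(false, Sum.inr (Sum.inr ((Equiv.swap (0:Fin 4) 3 * Equiv.swap (1:Fin 4) 2), ![false,true,true,true]))),
(true, Sum.inr (Sum.inl ![false,true,false,false])),
(true, Sum.inr (Sum.inl ![false,true,false,true])),
(true, Sum.inr (Sum.inl ![false,true,true,false])),
(true, Sum.inr (Sum.inl ![false,true,true,true])),
(true, Sum.inr (Sum.inr ((Equiv.swap (0:Fin 4) 1 * Equiv.swap (1:Fin 4) 2), ![false,false,true,false]))),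
(false, Sum.inr (Sum.inr ((Equiv.swap (0:Fin 4) 2 * Equiv.swap (0:Fin 4) 3), ![false,true,true,false]))),
(false, Sum.inr (Sum.inr ((Equiv.swap (0:Fin 4) 2 * Equiv.swap (0:Fin 4) 3), ![false,true,true,true]))),
(true, Sum.inr (Sum.inr ((Equiv.swap (0:Fin 4) 1 * Equiv.swap (1:Fin 4) 2), ![false,false,true,true]))),
(true, Sum.inr (Sum.inr ((Equiv.swap (0:Fin 4) 1 * Equiv.swap (1:Fin 4) 3), ![false,true,true,true]))),
(true, Sum.inr (Sum.inr ((Equiv.swap (0:Fin 4) 1 * Equiv.swap (1:Fin 4) 3), ![false,true,false,true]))),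
(false, Sum.inr (Sum.inr ((Equiv.swap (0:Fin 4) 2 * Equiv.swap (2:Fin 4) 3), ![false,false,false,true]))),
(false, Sum.inr (Sum.inr ((Equiv.swap (0:Fin 4) 2 * Equiv.swap (2:Fin 4) 3), ![false,false,true,true]))),
(false, Sum.inr (Sum.inr ((Equiv.swap (0:Fin 4) 2 * Equiv.swap (1:Fin 4) 3), ![false,false,true,false]))),
(false, Sum.inr (Sum.inr ((Equiv.swap (0:Fin 4) 2 * Equiv.swap (1:Fin 4) 3), ![false,false,true,true]))),
(false, Sum.inr (Sum.inr ((Equiv.swap (0:Fin 4) 1 * Equiv.swap (0:Fin 4) 2), ![false,true,false,false]))),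
(false, Sum.inr (Sum.inr ((Equiv.swap (0:Fin 4) 1 * Equiv.swap (0:Fin 4) 2), ![false,true,false,true]))),
(false, Sum.inr (Sum.inr ((Equiv.swap (0:Fin 4) 1 * Equiv.swap (0:Fin 4) 2), ![false,true,true,false]))),
(false, Sum.inr (Sum.inr ((Equiv.swap (0:Fin 4) 1 * Equiv.swap (0:Fin 4) 2), ![false,true,true,true]))),
(false, Sum.inr (Sum.inr ((Equiv.swap (0:Fin 4) 2 * Equiv.swap (1:Fin 4) 3), ![false,true,true,false]))),
(false, Sum.inr (Sum.inr ((Equiv.swap (0:Fin 4) 2 * Equiv.swap (1:Fin 4) 3), ![false,true,true,true]))),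
(false, Sum.inr (Sum.inr ((Equiv.swap (0:Fin 4) 2 * Equiv.swap (2:Fin 4) 3), ![false,true,false,true]))),
(false, Sum.inr (Sum.inr ((Equiv.swap (0:Fin 4) 2 * Equiv.swap (2:Fin 4) 3), ![false,true,true,true]))),
(false, Sum.inl (false, (1:Fin 4))),
(true, Sum.inr (Sum.inr ((Equiv.swap (1:Fin 4) 2 * Equiv.swap (1:Fin 4) 3), ![true,false,false,true]))),
(true, Sum.inr (Sum.inr ((Equiv.swap (1:Fin 4) 2 * Equiv.swap (1:Fin 4) 3), ![true,false,false,false]))),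
(true, Sum.inr (Sum.inr ((Equiv.swap (1:Fin 4) 2 * Equiv.swap (1:Fin 4) 3), ![true,false,true,true]))),
(true, Sum.inr (Sum.inr ((Equiv.swap (1:Fin 4) 2 * Equiv.swap (1:Fin 4) 3), ![true,false,true,false]))),
(true, Sum.inl (false, (1:Fin 4))),
(true, Sum.inr (Sum.inr ((Equiv.swap (1:Fin 4) 2 * Equiv.swap (2:Fin 4) 3), ![true,true,false,false]))),
(true, Sum.inr (Sum.inr ((Equiv.swap (1:Fin 4) 2 * Equiv.swap (2:Fin 4) 3), ![true,true,false,true]))),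
(false, Sum.inr (Sum.inr (1, ![true,false,false,false]))),
(false, Sum.inr (Sum.inr (1, ![true,false,false,true]))),
(false, Sum.inr (Sum.inr (1, ![true,false,true,false]))),
(false, Sum.inr (Sum.inr (1, ![true,false,true,true]))),
(true, Sum.inr (Sum.inr ((Equiv.swap (1:Fin 4) 2 * Equiv.swap (2:Fin 4) 3), ![true,true,true,false]))),
(true, Sum.inr (Sum.inr ((Equiv.swap (1:Fin 4) 2 * Equiv.swap (2:Fin 4) 3), ![true,true,true,true]))),
(true, Sum.inr (Sum.inr (1, ![true,false,true,false]))),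
(false, Sum.inr (Sum.inr ((Equiv.swap (1:Fin 4) 2 * Equiv.swap (1:Fin 4) 3), ![true,false,false,false]))),
(false, Sum.inr (Sum.inr ((Equiv.swap (1:Fin 4) 2 * Equiv.swap (1:Fin 4) 3), ![true,false,false,true]))),
(true, Sum.inr (Sum.inr (1, ![true,false,true,true]))),
(true, Sum.inr (Sum.inr (1, ![true,false,false,false]))),
(false, Sum.inr (Sum.inr ((Equiv.swap (1:Fin 4) 2 * Equiv.swap (1:Fin 4) 3), ![true,false,true,false]))),
(false, Sum.inr (Sum.inr ((Equiv.swap (1:Fin 4) 2 * Equiv.swap (1:Fin 4) 3), ![true,false,true,true]))),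
(true, Sum.inr (Sum.inr (1, ![true,false,false,true]))),
(false, Sum.inr (Sum.inr ((Equiv.swap (1:Fin 4) 2 * Equiv.swap (2:Fin 4) 3), ![true,false,false,false]))),
(false, Sum.inr (Sum.inr ((Equiv.swap (1:Fin 4) 2 * Equiv.swap (2:Fin 4) 3), ![true,false,false,true]))),
(false, Sum.inr (Sum.inr ((Equiv.swap (1:Fin 4) 2 * Equiv.swap (2:Fin 4) 3), ![true,false,true,false]))),
(false, Sum.inr (Sum.inr ((Equiv.swap (1:Fin 4) 2 * Equiv.swap (2:Fin 4) 3), ![true,false,true,true]))),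
(false, Sum.inl (false, (2:Fin 4))),
(true, Sum.inl (false, (2:Fin 4))),
(false, Sum.inl (false, (3:Fin 4))),
(true, Sum.inl (false, (3:Fin 4))),
(true, Sum.inl (true, (3:Fin 4))),
(false, Sum.inl (true, (3:Fin 4))),
(true, Sum.inl (true, (2:Fin 4))),
(false, Sum.inl (true, (2:Fin 4))),
(false, Sum.inr (Sum.inr ((Equiv.swap (1:Fin 4) 2 * Equiv.swap (2:Fin 4) 3), ![true,true,false,false]))),
(false, Sum.inr (Sum.inr ((Equiv.swap (1:Fin 4) 2 * Equiv.swap (2:Fin 4) 3), ![true,true,false,true]))),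
(false, Sum.inr (Sum.inr ((Equiv.swap (1:Fin 4) 2 * Equiv.swap (2:Fin 4) 3), ![true,true,true,false]))),
(false, Sum.inr (Sum.inr ((Equiv.swap (1:Fin 4) 2 * Equiv.swap (2:Fin 4) 3), ![true,true,true,true]))),
(true, Sum.inr (Sum.inr (1, ![true,true,true,false]))),
(false, Sum.inr (Sum.inr ((Equiv.swap (1:Fin 4) 2 * Equiv.swap (1:Fin 4) 3), ![true,true,false,false]))),
(false, Sum.inr (Sum.inr ((Equiv.swap (1:Fin 4) 2 * Equiv.swap (1:Fin 4) 3), ![true,true,false,true]))),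
(true, Sum.inr (Sum.inr (1, ![true,true,true,true]))),
(true, Sum.inr (Sum.inr (1, ![true,true,false,false]))),
(false, Sum.inr (Sum.inr ((Equiv.swap (1:Fin 4) 2 * Equiv.swap (1:Fin 4) 3), ![true,true,true,false]))),
(false, Sum.inr (Sum.inr ((Equiv.swap (1:Fin 4) 2 * Equiv.swap (1:Fin 4) 3), ![true,true,true,true]))),
(true, Sum.inr (Sum.inr (1, ![true,true,false,true]))),
(true, Sum.inr (Sum.inr ((Equiv.swap (1:Fin 4) 2 * Equiv.swap (2:Fin 4) 3), ![true,false,false,false]))),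
(true, Sum.inr (Sum.inr ((Equiv.swap (1:Fin 4) 2 * Equiv.swap (2:Fin 4) 3), ![true,false,false,true]))),
(false, Sum.inr (Sum.inr (1, ![true,true,false,false]))),
(false, Sum.inr (Sum.inr (1, ![true,true,false,true]))),
(false, Sum.inr (Sum.inr (1, ![true,true,true,false]))),
(false, Sum.inr (Sum.inr (1, ![true,true,true,true]))),
(true, Sum.inr (Sum.inr ((Equiv.swap (1:Fin 4) 2 * Equiv.swap (2:Fin 4) 3), ![true,false,true,false]))),
(true, Sum.inr (Sum.inr ((Equiv.swap (1:Fin 4) 2 * Equiv.swap (2:Fin 4) 3), ![true,false,true,true]))),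
(true, Sum.inl (true, (1:Fin 4))),
(true, Sum.inr (Sum.inr ((Equiv.swap (1:Fin 4) 2 * Equiv.swap (1:Fin 4) 3), ![true,true,false,true]))),
(true, Sum.inr (Sum.inr ((Equiv.swap (1:Fin 4) 2 * Equiv.swap (1:Fin 4) 3), ![true,true,false,false]))),
(true, Sum.inr (Sum.inr ((Equiv.swap (1:Fin 4) 2 * Equiv.swap (1:Fin 4) 3), ![true,true,true,true]))),
(true, Sum.inr (Sum.inr ((Equiv.swap (1:Fin 4) 2 * Equiv.swap (1:Fin 4) 3), ![true,true,true,false]))),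
(false, Sum.inl (true, (1:Fin 4))),
(false, Sum.inr (Sum.inr ((Equiv.swap (0:Fin 4) 2 * Equiv.swap (2:Fin 4) 3), ![true,false,false,true]))),
(false, Sum.inr (Sum.inr ((Equiv.swap (0:Fin 4) 2 * Equiv.swap (2:Fin 4) 3), ![true,false,true,true]))),
(false, Sum.inr (Sum.inr ((Equiv.swap (0:Fin 4) 2 * Equiv.swap (1:Fin 4) 3), ![true,false,true,false]))),
(false, Sum.inr (Sum.inr ((Equiv.swap (0:Fin 4) 2 * Equiv.swap (1:Fin 4) 3), ![true,false,true,true]))),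
(false, Sum.inr (Sum.inr ((Equiv.swap (0:Fin 4) 1 * Equiv.swap (0:Fin 4) 2), ![true,true,false,false]))),
(false, Sum.inr (Sum.inr ((Equiv.swap (0:Fin 4) 1 * Equiv.swap (0:Fin 4) 2), ![true,true,false,true]))),
(false, Sum.inr (Sum.inr ((Equiv.swap (0:Fin 4) 1 * Equiv.swap (0:Fin 4) 2), ![true,true,true,false]))),
(false, Sum.inr (Sum.inr ((Equiv.swap (0:Fin 4) 1 * Equiv.swap (0:Fin 4) 2), ![true,true,true,true]))),
(false, Sum.inr (Sum.inr ((Equiv.swap (0:Fin 4) 2 * Equiv.swap (1:Fin 4) 3), ![true,true,true,false]))),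
(false, Sum.inr (Sum.inr ((Equiv.swap (0:Fin 4) 2 * Equiv.swap (1:Fin 4) 3), ![true,true,true,true]))),
(false, Sum.inr (Sum.inr ((Equiv.swap (0:Fin 4) 2 * Equiv.swap (2:Fin 4) 3), ![true,true,false,true]))),
(false, Sum.inr (Sum.inr ((Equiv.swap (0:Fin 4) 2 * Equiv.swap (2:Fin 4) 3), ![true,true,true,true]))),
(true, Sum.inr (Sum.inr ((Equiv.swap (0:Fin 4) 1 * Equiv.swap (1:Fin 4) 3), ![true,false,true,true]))),
(true, Sum.inr (Sum.inr ((Equiv.swap (0:Fin 4) 1 * Equiv.swap (1:Fin 4) 3), ![true,false,false,true]))),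
(true, Sum.inr (Sum.inr ((Equiv.swap (0:Fin 4) 1 * Equiv.swap (1:Fin 4) 2), ![true,true,true,false]))),
(false, Sum.inr (Sum.inr ((Equiv.swap (0:Fin 4) 2 * Equiv.swap (0:Fin 4) 3), ![true,false,true,false]))),
(false, Sum.inr (Sum.inr ((Equiv.swap (0:Fin 4) 2 * Equiv.swap (0:Fin 4) 3), ![true,false,true,true]))),
(true, Sum.inr (Sum.inr ((Equiv.swap (0:Fin 4) 1 * Equiv.swap (1:Fin 4) 2), ![true,true,true,true]))),
(true, Sum.inr (Sum.inl ![true,false,false,false])),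
(true, Sum.inr (Sum.inl ![true,false,false,true])),
(true, Sum.inr (Sum.inl ![true,false,true,false])),
(true, Sum.inr (Sum.inl ![true,false,true,true])),
(false, Sum.inr (Sum.inr ((Equiv.swap (0:Fin 4) 3 * Equiv.swap (1:Fin 4) 2), ![true,false,false,true]))),
(false, Sum.inr (Sum.inr ((Equiv.swap (0:Fin 4) 3 * Equiv.swap (1:Fin 4) 2), ![true,false,true,true]))),
(true, Sum.inr (Sum.inr ((Equiv.swap (0:Fin 4) 1 * Equiv.swap (2:Fin 4) 3), ![true,true,false,true]))),
(true, Sum.inr (Sum.inr ((Equiv.swap (0:Fin 4) 1 * Equiv.swap (2:Fin 4) 3), ![true,true,false,false]))),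
(false, Sum.inr (Sum.inr ((Equiv.swap (0:Fin 4) 1 * Equiv.swap (0:Fin 4) 3), ![true,true,false,false]))),
(false, Sum.inr (Sum.inr ((Equiv.swap (0:Fin 4) 1 * Equiv.swap (0:Fin 4) 3), ![true,true,false,true]))),
(false, Sum.inr (Sum.inr ((Equiv.swap (0:Fin 4) 1 * Equiv.swap (0:Fin 4) 3), ![true,true,true,false]))),
(false, Sum.inr (Sum.inr ((Equiv.swap (0:Fin 4) 1 * Equiv.swap (0:Fin 4) 3), ![true,true,true,true]))),
(true, Sum.inr (Sum.inr ((Equiv.swap (0:Fin 4) 1 * Equiv.swap (2:Fin 4) 3), ![true,true,true,true]))),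
(true, Sum.inr (Sum.inr ((Equiv.swap (0:Fin 4) 1 * Equiv.swap (2:Fin 4) 3), ![true,true,true,false]))),
(false, Sum.inr (Sum.inr ((Equiv.swap (0:Fin 4) 3 * Equiv.swap (1:Fin 4) 2), ![true,true,false,true]))),
(false, Sum.inr (Sum.inr ((Equiv.swap (0:Fin 4) 3 * Equiv.swap (1:Fin 4) 2), ![true,true,true,true]))),
(true, Sum.inr (Sum.inl ![true,true,false,false])),
(true, Sum.inr (Sum.inl ![true,true,false,true])),
(true, Sum.inr (Sum.inl ![true,true,true,false])),
(true, Sum.inr (Sum.inl ![true,true,true,true])),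
(true, Sum.inr (Sum.inr ((Equiv.swap (0:Fin 4) 1 * Equiv.swap (1:Fin 4) 2), ![true,false,true,false]))),
(false, Sum.inr (Sum.inr ((Equiv.swap (0:Fin 4) 2 * Equiv.swap (0:Fin 4) 3), ![true,true,true,false]))),
(false, Sum.inr (Sum.inr ((Equiv.swap (0:Fin 4) 2 * Equiv.swap (0:Fin 4) 3), ![true,true,true,true]))),
(true, Sum.inr (Sum.inr ((Equiv.swap (0:Fin 4) 1 * Equiv.swap (1:Fin 4) 2), ![true,false,true,true]))),
(true, Sum.inr (Sum.inr ((Equiv.swap (0:Fin 4) 1 * Equiv.swap (1:Fin 4) 3), ![true,true,true,true]))),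
(true, Sum.inr (Sum.inr ((Equiv.swap (0:Fin 4) 1 * Equiv.swap (1:Fin 4) 3), ![true,true,false,true]))),
(true, Sum.inr (Sum.inr ((Equiv.swap (0:Fin 4) 2 * Equiv.swap (1:Fin 4) 3), ![false,false,true,false]))),
(true, Sum.inr (Sum.inr ((Equiv.swap (0:Fin 4) 2 * Equiv.swap (1:Fin 4) 3), ![false,false,true,true]))),
(false, Sum.inr (Sum.inl ![true,false,false,false])),
(false, Sum.inr (Sum.inl ![true,false,false,true])),
(false, Sum.inr (Sum.inl ![true,false,true,false])),
(false, Sum.inr (Sum.inl ![true,false,true,true])),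
(true, Sum.inr (Sum.inr ((Equiv.swap (0:Fin 4) 2 * Equiv.swap (2:Fin 4) 3), ![false,false,false,true]))),
(false, Sum.inr (Sum.inr ((Equiv.swap (0:Fin 4) 1 * Equiv.swap (1:Fin 4) 3), ![true,false,false,true]))),
(false, Sum.inr (Sum.inr ((Equiv.swap (0:Fin 4) 1 * Equiv.swap (1:Fin 4) 3), ![true,false,true,true]))),
(true, Sum.inr (Sum.inr ((Equiv.swap (0:Fin 4) 2 * Equiv.swap (2:Fin 4) 3), ![false,false,true,true]))),
(false, Sum.inr (Sum.inr ((Equiv.swap (0:Fin 4) 1 * Equiv.swap (1:Fin 4) 2), ![true,false,true,false]))),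
(false, Sum.inr (Sum.inr ((Equiv.swap (0:Fin 4) 1 * Equiv.swap (1:Fin 4) 2), ![true,false,true,true]))),
(true, Sum.inr (Sum.inr ((Equiv.swap (0:Fin 4) 1 * Equiv.swap (0:Fin 4) 2), ![false,true,false,false]))),
(false, Sum.inr (Sum.inr ((Equiv.swap (0:Fin 4) 1 * Equiv.swap (2:Fin 4) 3), ![true,true,false,false]))),
(false, Sum.inr (Sum.inr ((Equiv.swap (0:Fin 4) 1 * Equiv.swap (2:Fin 4) 3), ![true,true,false,true]))),
(true, Sum.inr (Sum.inr ((Equiv.swap (0:Fin 4) 1 * Equiv.swap (0:Fin 4) 2), ![false,true,false,true]))),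
(true, Sum.inr (Sum.inr ((Equiv.swap (0:Fin 4) 1 * Equiv.swap (0:Fin 4) 2), ![false,true,true,false]))),
(false, Sum.inr (Sum.inr ((Equiv.swap (0:Fin 4) 1 * Equiv.swap (2:Fin 4) 3), ![true,true,true,false]))),
(false, Sum.inr (Sum.inr ((Equiv.swap (0:Fin 4) 1 * Equiv.swap (2:Fin 4) 3), ![true,true,true,true]))),
(true, Sum.inr (Sum.inr ((Equiv.swap (0:Fin 4) 1 * Equiv.swap (0:Fin 4) 2), ![false,true,true,true]))),
(false, Sum.inr (Sum.inr ((Equiv.swap (0:Fin 4) 1 * Equiv.swap (1:Fin 4) 2), ![true,true,true,false]))),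
(false, Sum.inr (Sum.inr ((Equiv.swap (0:Fin 4) 1 * Equiv.swap (1:Fin 4) 2), ![true,true,true,true]))),
(true, Sum.inr (Sum.inr ((Equiv.swap (0:Fin 4) 2 * Equiv.swap (2:Fin 4) 3), ![false,true,false,true]))),
(false, Sum.inr (Sum.inr ((Equiv.swap (0:Fin 4) 1 * Equiv.swap (1:Fin 4) 3), ![true,true,false,true]))),
(false, Sum.inr (Sum.inr ((Equiv.swap (0:Fin 4) 1 * Equiv.swap (1:Fin 4) 3), ![true,true,true,true]))),
(true, Sum.inr (Sum.inr ((Equiv.swap (0:Fin 4) 2 * Equiv.swap (2:Fin 4) 3), ![false,true,true,true]))),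
(false, Sum.inr (Sum.inl ![true,true,false,false])),
(false, Sum.inr (Sum.inl ![true,true,false,true])),
(false, Sum.inr (Sum.inl ![true,true,true,false])),
(false, Sum.inr (Sum.inl ![true,true,true,true])),
(true, Sum.inr (Sum.inr ((Equiv.swap (0:Fin 4) 2 * Equiv.swap (1:Fin 4) 3), ![false,true,true,false]))),
(true, Sum.inr (Sum.inr ((Equiv.swap (0:Fin 4) 2 * Equiv.swap (1:Fin 4) 3), ![false,true,true,true]))),
(true, Sum.inl (true, (0:Fin 4))),
(true, Sum.inr (Sum.inr ((Equiv.swap (0:Fin 4) 3 * Equiv.swap (1:Fin 4) 2), ![true,true,false,true]))),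
(true, Sum.inr (Sum.inr ((Equiv.swap (0:Fin 4) 3 * Equiv.swap (1:Fin 4) 2), ![true,true,true,true]))),
(true, Sum.inr (Sum.inr ((Equiv.swap (0:Fin 4) 2 * Equiv.swap (0:Fin 4) 3), ![true,false,true,true]))),
(true, Sum.inr (Sum.inr ((Equiv.swap (0:Fin 4) 2 * Equiv.swap (0:Fin 4) 3), ![true,false,true,false]))),
(true, Sum.inr (Sum.inr ((Equiv.swap (0:Fin 4) 1 * Equiv.swap (0:Fin 4) 3), ![true,true,true,false]))),
(true, Sum.inr (Sum.inr ((Equiv.swap (0:Fin 4) 1 * Equiv.swap (0:Fin 4) 3), ![true,true,true,true]))),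
(true, Sum.inr (Sum.inr ((Equiv.swap (0:Fin 4) 1 * Equiv.swap (0:Fin 4) 3), ![true,true,false,false]))),
(true, Sum.inr (Sum.inr ((Equiv.swap (0:Fin 4) 1 * Equiv.swap (0:Fin 4) 3), ![true,true,false,true]))),
(true, Sum.inr (Sum.inr ((Equiv.swap (0:Fin 4) 2 * Equiv.swap (0:Fin 4) 3), ![true,true,true,true]))),
(true, Sum.inr (Sum.inr ((Equiv.swap (0:Fin 4) 2 * Equiv.swap (0:Fin 4) 3), ![true,true,true,false]))),
(true, Sum.inr (Sum.inr ((Equiv.swap (0:Fin 4) 3 * Equiv.swap (1:Fin 4) 2), ![true,false,false,true]))),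
(true, Sum.inr (Sum.inr ((Equiv.swap (0:Fin 4) 3 * Equiv.swap (1:Fin 4) 2), ![true,false,true,true]))),
(false, Sum.inl (true, (0:Fin 4)))]
/- ### forcing combinators -/

def fN (x : Nat) (k : Nat → Bool) : Bool := match x with | 0 => k 0 | Nat.succ n => k (Nat.succ n)

def fI (x : ℤ) (k : ℤ → Bool) : Bool :=
  match x with
  | Int.ofNat n => fN n (fun m => k (Int.ofNat m))
  | Int.negSucc n => fN n (fun m => k (Int.negSucc m))

lemma fN_eq (x : Nat) (k : Nat → Bool) : fN x k = k x := by cases x <;> rfl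

lemma fI_eq (x : ℤ) (k : ℤ → Bool) : fI x k = k x := by
  cases x <;> simp only [fI, fN_eq]

def enc (x : ℤ) : Nat := (x + 512).toNat

def key8 (t : V8) : Nat :=
  ((((((enc t.1*1024+enc t.2.1)*1024+enc t.2.2.1)*1024+enc t.2.2.2.1)*1024
    +enc t.2.2.2.2.1)*1024+enc t.2.2.2.2.2.1)*1024+enc t.2.2.2.2.2.2.1)*1024+enc t.2.2.2.2.2.2.2

/-- fast membership test in `TRIE` -/
def M (t : V8) : Bool := fN (key8 t) (fun n => F TRIE n t)

lemma M_mem {t : V8} (h : M t = true) : t ∈ elemsVT TRIE := by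
  rw [M, fN_eq] at h; exact F_mem h

/- ### the reflection check -/

def sreD (p q : V8) : ℤ :=
  q.1*p.1+5*q.2.1*p.2.1 + q.2.2.1*p.2.2.1+5*q.2.2.2.1*p.2.2.2.1
  + q.2.2.2.2.1*p.2.2.2.2.1+5*q.2.2.2.2.2.1*p.2.2.2.2.2.1
  + q.2.2.2.2.2.2.1*p.2.2.2.2.2.2.1+5*q.2.2.2.2.2.2.2*p.2.2.2.2.2.2.2

def simD (p q : V8) : ℤ :=
  q.1*p.2.1+q.2.1*p.1 + q.2.2.1*p.2.2.2.1+q.2.2.2.1*p.2.2.1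
  + q.2.2.2.2.1*p.2.2.2.2.2.1+q.2.2.2.2.2.1*p.2.2.2.2.1
  + q.2.2.2.2.2.2.1*p.2.2.2.2.2.2.2+q.2.2.2.2.2.2.2*p.2.2.2.2.2.2.1

def rT (a : ℤ) (p q : V8) : V8 :=
  (q.1 - a*p.1, q.2.1 - a*p.2.1, q.2.2.1 - a*p.2.2.1, q.2.2.2.1 - a*p.2.2.2.1,
   q.2.2.2.2.1 - a*p.2.2.2.2.1, q.2.2.2.2.2.1 - a*p.2.2.2.2.2.1,
   q.2.2.2.2.2.2.1 - a*p.2.2.2.2.2.2.1, q.2.2.2.2.2.2.2 - a*p.2.2.2.2.2.2.2)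

def chkB (v0 v1 v2 v3 v4 v5 v6 v7 w0 w1 w2 w3 w4 w5 w6 w7 : ℤ) : Bool :=
    fI (w0*v0+5*w1*v1 + w2*v2+5*w3*v3 + w4*v4+5*w5*v5 + w6*v6+5*w7*v7) fun sre =>
    fI (w0*v1+w1*v0 + w2*v3+w3*v2 + w4*v5+w5*v4 + w6*v7+w7*v6) fun sim =>
    (sim % 16 == 0 && (sre - sim) % 32 == 0) &&
      (fI ((sre - sim)/32) fun a =>
       fI (w0-a*v0) fun r0 => fI (w1-a*v1) fun r1 => fI (w2-a*v2) fun r2 =>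
       fI (w3-a*v3) fun r3 => fI (w4-a*v4) fun r4 => fI (w5-a*v5) fun r5 =>
       fI (w6-a*v6) fun r6 => fI (w7-a*v7) fun r7 =>
       fN (key8 (r0,r1,r2,r3,r4,r5,r6,r7)) fun n =>
       F TRIE n (r0,r1,r2,r3,r4,r5,r6,r7))

def chk (p q : V8) : Bool :=
  chkB p.1 p.2.1 p.2.2.1 p.2.2.2.1 p.2.2.2.2.1 p.2.2.2.2.2.1 p.2.2.2.2.2.2.1 p.2.2.2.2.2.2.2
       q.1 q.2.1 q.2.2.1 q.2.2.2.1 q.2.2.2.2.1 q.2.2.2.2.2.1 q.2.2.2.2.2.2.1 q.2.2.2.2.2.2.2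

lemma chk_eq (p q : V8) :
    chk p q = ((simD p q % 16 == 0 && (sreD p q - simD p q) % 32 == 0) &&
      F TRIE (key8 (rT ((sreD p q - simD p q)/32) p q)) (rT ((sreD p q - simD p q)/32) p q)) := by
  simp only [chk, chkB, fI_eq, fN_eq, sreD, simD, rT]
/- ### semantics of the check -/

lemma inner_e8 (p q : V8) :
    2 * ⟪e8 q, e8 p⟫ = ((sreD p q : ℝ) + (simD p q : ℝ) * sq5)/32 := by
  simp only [PiLp.inner_apply, RCLike.inner_apply, starRingEnd_apply, star_trivial,
    Fin.sum_univ_four, e8, sreD, simD]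
  simp only [Matrix.cons_val_zero, Matrix.cons_val_one, Matrix.head_cons,
    Matrix.cons_val_two, Matrix.tail_cons, Matrix.cons_val_three]
  push_cast
  linear_combination (((q.2.1:ℝ)*(p.2.1:ℝ) + (q.2.2.2.1:ℝ)*(p.2.2.2.1:ℝ)
    + (q.2.2.2.2.2.1:ℝ)*(p.2.2.2.2.2.1:ℝ) + (q.2.2.2.2.2.2.2:ℝ)*(p.2.2.2.2.2.2.2:ℝ))/32) * h5

lemma e8_rT (a : ℤ) (p q : V8) : e8 q - (a:ℝ) • e8 p = e8 (rT a p q) := by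
  ext i
  have : (e8 q - (a:ℝ) • e8 p) i = e8 q i - (a:ℝ) * e8 p i := rfl
  rw [this]
  fin_cases i <;> simp [e8, rT] <;> push_cast <;> ring

lemma pair (p q : V8) (h : chk p q = true) :
    ∃ a b : ℤ, 2 * ⟪e8 q, e8 p⟫ = (a:ℝ) + (b:ℝ) * τ ∧
      e8 q - (a:ℝ) • e8 p = e8 (rT a p q) ∧ rT a p q ∈ elemsVT TRIE := by
  rw [chk_eq] at h
  simp only [Bool.and_eq_true, beq_iff_eq] at h
  obtain ⟨⟨h1, h2⟩, h3⟩ := h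
  refine ⟨(sreD p q - simD p q)/32, simD p q / 16, ?_, e8_rT _ p q, F_mem h3⟩
  have e1 : (32:ℤ) * ((sreD p q - simD p q)/32) = sreD p q - simD p q :=
    Int.mul_ediv_cancel' (Int.dvd_of_emod_eq_zero h2)
  have e2 : (16:ℤ) * (simD p q / 16) = simD p q :=
    Int.mul_ediv_cancel' (Int.dvd_of_emod_eq_zero h1)
  have c1 : ((sreD p q :ℝ)) - ((simD p q :ℝ)) = 32*(((sreD p q - simD p q)/32 : ℤ):ℝ) := by
    exact_mod_cast (congrArg (fun z : ℤ => (z:ℝ)) e1).symm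
  have c2 : ((simD p q :ℝ)) = 16*((simD p q / 16 : ℤ):ℝ) := by
    exact_mod_cast (congrArg (fun z : ℤ => (z:ℝ)) e2).symm
  rw [inner_e8]
  have hτ : τ = (1 + sq5)/2 := rfl
  rw [hτ]
  linear_combination c1/32 + (1 + sq5)/32 * c2

/- ### forward/backward between Φ240 and the list -/

lemma Sgn_repr {y : ℝ} (h : y ∈ Sgn) : ∃ b : Bool, y = cR b := by
  rcases h with rfl | rfl
  exacts [⟨true, by simp [cR]⟩, ⟨false, by simp [cR]⟩]

lemma cR_mem (b : Bool) : cR b ∈ Sgn := by cases b <;> simp [cR, Sgn]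

lemma wlem (j : Fin 4) : ((wre j :ℝ) + (wim j:ℝ) * sq5)/4 = ![0,1,σ,τ] j / 2 := by
  fin_cases j <;> simp [wre, wim, σ, τ, sq5] <;> ring

lemma E4_u1 (s : Bool) (m l : Fin 4) : E4 (u1 s m) l = if l = m then cR s else 0 := by
  by_cases h : l = m <;> cases s <;> simp [E4, u1, cz, cR, h] <;> norm_num

lemma E4_u2 (s : Fin 4 → Bool) (m : Fin 4) : E4 (u2 s) m = cR (s m) / 2 := by
  cases hsm : s m <;> simp [E4, u2, cz, cR, hsm] <;> norm_num

lemma E4_u3 (π : Equiv.Perm (Fin 4)) (s : Fin 4 → Bool) (m : Fin 4) :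
    E4 (u3 π s) m = cR (s m) * ![0,1,σ,τ] (π m) / 2 := by
  rw [mul_div_assoc, ← wlem (π m)]
  cases hsm : s m <;> simp [E4, u3, cz, cR, hsm] <;> push_cast <;> ring

def validC : (Bool × Fin 4) ⊕ ((Fin 4 → Bool) ⊕ (Equiv.Perm (Fin 4) × (Fin 4 → Bool))) → Bool
  | .inr (.inr (π, _)) => decide (Equiv.Perm.sign π = 1)
  | _ => true

lemma H4_bwd (c) (hc : validC c = true) : E4 (genU c) ∈ ΦH4 := by
  simp only [ΦH4, Set.mem_union, Set.mem_setOf_eq]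
  rcases c with ⟨s,m⟩ | s | ⟨π,s⟩
  · exact Or.inl (Or.inl ⟨cR s, cR_mem s, m, fun l => E4_u1 s m l⟩)
  · exact Or.inl (Or.inr ⟨fun m => cR (s m), fun m => cR_mem _, fun m => E4_u2 s m⟩)
  · exact Or.inr ⟨π, of_decide_eq_true hc, fun m => cR (s m), fun m => cR_mem _,
      fun m => E4_u3 π s m⟩

lemma H4_fwd {x} (hx : x ∈ ΦH4) : ∃ c, validC c = true ∧ x = E4 (genU c) := by
  simp only [ΦH4, Set.mem_union, Set.mem_setOf_eq] at hx
  rcases hx with (⟨ε, hε, m, hq⟩ | ⟨ε, hε, hq⟩) | ⟨π, hπ, ε, hε, hq⟩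
  · obtain ⟨b, rfl⟩ := Sgn_repr hε
    exact ⟨.inl (b, m), rfl, PiLp.ext fun l => by rw [hq l]; exact (E4_u1 b m l).symm⟩
  · choose b hb using fun m => Sgn_repr (hε m)
    exact ⟨.inr (.inl b), rfl, PiLp.ext fun m => by rw [hq m, hb m]; exact (E4_u2 b m).symm⟩
  · choose b hb using fun m => Sgn_repr (hε m)
    exact ⟨.inr (.inr (π, b)), by simp [validC, hπ],
      PiLp.ext fun m => by rw [hq m, hb m]; exact (E4_u3 π b m).symm⟩

lemma Dmem : ∀ c, validC c = true →
    (M (toT (dbl (genU c))) = true ∧ M (toT (tml (genU c))) = true) := by decide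

lemma Phi240_fwd {x} (hx : x ∈ Φ240) : ∃ t ∈ elemsVT TRIE, x = e8 t := by
  simp only [Φ240, Set.mem_union, Set.mem_image] at hx
  rcases hx with hx | ⟨y, hy, rfl⟩
  · obtain ⟨c, hc, rfl⟩ := H4_fwd hx
    exact ⟨toT (dbl (genU c)), M_mem (Dmem c hc).1, (e8_toT_dbl _).symm⟩
  · obtain ⟨c, hc, rfl⟩ := H4_fwd hy
    exact ⟨toT (tml (genU c)), M_mem (Dmem c hc).2, (e8_toT_tml _).symm⟩

lemma DW1 : (witList.map tupleOf == elemsVT TRIE) = true := by decide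

lemma DWeq : witList.map tupleOf = elemsVT TRIE := eq_of_beq DW1

lemma DW2 : witList.all (fun p => validC p.2) = true := by decide

lemma Phi240_bwd : ∀ t ∈ elemsVT TRIE, e8 t ∈ Φ240 := by
  intro t ht
  rw [← DWeq] at ht
  obtain ⟨p, hp, rfl⟩ := List.mem_map.1 ht
  have hv : validC p.2 = true := by
    have := DW2; rw [List.all_eq_true] at this; exact this p hp
  simp only [Φ240, Set.mem_union, Set.mem_image]
  obtain ⟨b, c⟩ := p
  cases b
  · left; rw [show tupleOf (false, c) = toT (dbl (genU c)) from rfl, e8_toT_dbl]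
    exact H4_bwd c hv
  · right
    exact ⟨E4 (genU c), H4_bwd c hv,
      by rw [show tupleOf (true, c) = toT (tml (genU c)) from rfl, e8_toT_tml]⟩

/- ### negation symmetry -/

lemma DH : ((elemsVT TRIE).all fun t =>
    (fN (key8 t) fun n => F HTRIE n t) || (fN (key8 (negT t)) fun n => F HTRIE n (negT t)))
    = true := by decide

lemma Dneg : ((elemsVT TRIE).all fun t => M (negT t)) = true := by decide

lemma half_cover {t : V8} (ht : t ∈ elemsVT TRIE) :
    t ∈ elemsVT HTRIE ∨ negT t ∈ elemsVT HTRIE := by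
  have h := List.all_eq_true.1 DH t ht
  rw [Bool.or_eq_true, fN_eq, fN_eq] at h
  exact h.imp F_mem F_mem

lemma negPhi {x} (hx : x ∈ Φ240) : -x ∈ Φ240 := by
  obtain ⟨t, ht, rfl⟩ := Phi240_fwd hx
  rw [← e8_negT]
  exact Phi240_bwd _ (M_mem (List.all_eq_true.1 Dneg t ht))

/- ### the goal predicate -/

def P (q r : EuclideanSpace ℝ (Fin 4)) : Prop :=
  ∃ a b : ℤ, 2 * ⟪r, q⟫ = (a:ℝ) + (b:ℝ) * τ ∧ r - (a:ℝ) • q ∈ Φ240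

lemma P_negq {q r} (h : P q r) : P (-q) r := by
  obtain ⟨a, b, h1, h2⟩ := h
  refine ⟨-a, -b, ?_, ?_⟩
  · rw [inner_neg_right]; push_cast; linear_combination -h1
  · push_cast
    rw [show r - (-(a:ℝ)) • (-q) = r - (a:ℝ) • q by module]
    exact h2

lemma P_negr {q r} (h : P q r) : P q (-r) := by
  obtain ⟨a, b, h1, h2⟩ := h
  refine ⟨-a, -b, ?_, ?_⟩
  · rw [inner_neg_left]; push_cast; linear_combination -h1
  · push_cast
    rw [show -r - (-(a:ℝ)) • q = -(r - (a:ℝ) • q) by module]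
    exact negPhi h2

/- ### the big computation -/

lemma CORE : ((elemsVT HTRIE).all fun p => (elemsVT HTRIE).all fun w => chk p w) = true := by
  decide

lemma P_base : ∀ p ∈ elemsVT HTRIE, ∀ w ∈ elemsVT HTRIE, P (e8 p) (e8 w) := by
  intro p hp w hw
  have h := List.all_eq_true.1 (List.all_eq_true.1 CORE p hp) w hw
  obtain ⟨a, b, h1, h2, h3⟩ := pair p w h
  exact ⟨a, b, h1, by rw [h2]; exact Phi240_bwd _ h3⟩

/-- For all `q, r ∈ Φ₂₄₀` there are integers `a, b` with `2⟪r,q⟫ = a + b·τ`, and for this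
`a` one has `r − a·q ∈ Φ₂₄₀`: since every `q ∈ Φ₂₄₀` has reduced squared norm 1, the map
`r ↦ r − a·q` is the reflection in the hyperplane orthogonal to `q` with respect to the
reduced inner product, so `Φ₂₄₀` is closed under `E₈` reflections, realizing the 240
roots of `E₈`. -/
theorem Phi240_closed_under_E8_reflections :
    ∀ q ∈ Φ240, ∀ r ∈ Φ240, ∃ a b : ℤ,
      2 * ⟪r, q⟫ = (a : ℝ) + (b : ℝ) * τ ∧ r - (a : ℝ) • q ∈ Φ240 := by
  have main : ∀ q ∈ Φ240, ∀ r ∈ Φ240, P q r := by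
    intro q hq r hr
    obtain ⟨v, hv, rfl⟩ := Phi240_fwd hq
    obtain ⟨w, hw, rfl⟩ := Phi240_fwd hr
    rcases half_cover hv with h1 | h1 <;> rcases half_cover hw with h2 | h2
    · exact P_base v h1 w h2
    · have := P_negr (P_base v h1 (negT w) h2); rwa [e8_negT, neg_neg] at this
    · have := P_negq (P_base (negT v) h1 w h2); rwa [e8_negT, neg_neg] at this
    · have := P_negq (P_negr (P_base (negT v) h1 (negT w) h2))
      rwa [e8_negT, e8_negT, neg_neg, neg_neg] at this
  exact main
end
end

section
/- The eight vectors α₁, α₂, α₃, α₄, α₅ = τα₁, α₆ = τα₂, α₇ = τα₃, α₈ = τα₄ are linearly independent over ℚ (regarding ℝ⁴ as a vector space over ℚ); hence they can serve as the eight simple roots of an E₈ root system. -/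
noncomputable section

/-- The eight vectors `α₁ = ½(-σ,-τ,0,-1)`, `α₂ = ½(0,-σ,-τ,1)`, `α₃ = ½(0,1,-σ,-τ)`,
`α₄ = ½(0,-1,-σ,τ)` and `α_{i+4} = τ·αᵢ` in Euclidean `ℝ⁴`. -/
def α : Fin 8 → EuclideanSpace ℝ (Fin 4) :=
  ![!₂[-σ / 2, -τ / 2, 0, -1 / 2],
    !₂[0, -σ / 2, -τ / 2, 1 / 2],
    !₂[0, 1 / 2, -σ / 2, -τ / 2],
    !₂[0, -1 / 2, -σ / 2, τ / 2],
    τ • !₂[-σ / 2, -τ / 2, 0, -1 / 2],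
    τ • !₂[0, -σ / 2, -τ / 2, 1 / 2],
    τ • !₂[0, 1 / 2, -σ / 2, -τ / 2],
    τ • !₂[0, -1 / 2, -σ / 2, τ / 2]]

private lemma cons_val_five' {β : Type*} {m : ℕ} (x : β) (u : Fin (m+5) → β) :
    Matrix.vecCons x u 5 =
      Matrix.vecHead (Matrix.vecTail (Matrix.vecTail (Matrix.vecTail (Matrix.vecTail u)))) := rfl

private lemma cons_val_six' {β : Type*} {m : ℕ} (x : β) (u : Fin (m+6) → β) :
    Matrix.vecCons x u 6 =
      Matrix.vecHead (Matrix.vecTail (Matrix.vecTail (Matrix.vecTail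
        (Matrix.vecTail (Matrix.vecTail u))))) := rfl

private lemma cons_val_seven' {β : Type*} {m : ℕ} (x : β) (u : Fin (m+7) → β) :
    Matrix.vecCons x u 7 =
      Matrix.vecHead (Matrix.vecTail (Matrix.vecTail (Matrix.vecTail (Matrix.vecTail
        (Matrix.vecTail (Matrix.vecTail u)))))) := rfl

private lemma rat_sqrt5_eq_zero (a b : ℚ) (h : (a : ℝ) + (b : ℝ) * Real.sqrt 5 = 0) :
    a = 0 ∧ b = 0 := by
  have hirr : Irrational (Real.sqrt 5) := (Nat.prime_five).irrational_sqrt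
  rcases eq_or_ne b 0 with hb | hb
  · subst hb
    simp only [Rat.cast_zero, zero_mul, add_zero] at h
    exact ⟨by exact_mod_cast h, rfl⟩
  · exfalso
    apply hirr
    refine ⟨-a / b, ?_⟩
    have hb' : (b : ℝ) ≠ 0 := by exact_mod_cast hb
    push_cast
    field_simp
    linarith
/-- The eight vectors `α₁, …, α₄, τα₁, …, τα₄` are linearly independent over `ℚ`
(regarding `ℝ⁴` as a `ℚ`-vector space); hence they can serve as the eight simple roots
of an `E₈` root system. -/
theorem alpha_linearIndependent_over_Q : LinearIndependent ℚ α := by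
  rw [Fintype.linearIndependent_iff]
  intro g hg
  have hs : Real.sqrt 5 * Real.sqrt 5 = 5 := Real.mul_self_sqrt (by norm_num)
  have h0 := congrArg (fun v : EuclideanSpace ℝ (Fin 4) => v.ofLp 0) hg
  have h1 := congrArg (fun v : EuclideanSpace ℝ (Fin 4) => v.ofLp 1) hg
  have h2 := congrArg (fun v : EuclideanSpace ℝ (Fin 4) => v.ofLp 2) hg
  have h3 := congrArg (fun v : EuclideanSpace ℝ (Fin 4) => v.ofLp 3) hg
  simp only [α, τ, σ, Finset.sum_apply, Pi.smul_apply, smul_eq_mul, Pi.zero_apply,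
    Fin.sum_univ_eight, cons_val_five', cons_val_six', cons_val_seven',
    Matrix.cons_val_zero, Matrix.cons_val_one, Matrix.cons_val_two, Matrix.cons_val_three,
    Matrix.cons_val_four, Matrix.head_cons, Matrix.tail_cons, Matrix.smul_cons,
    Matrix.smul_empty, Matrix.head_fin_const,
    Pi.add_apply, Rat.smul_def, PiLp.add_apply, PiLp.smul_apply, PiLp.zero_apply,
    WithLp.ofLp_sum, WithLp.ofLp_smul, WithLp.ofLp_zero, WithLp.ofLp_toLp] at h0 h1 h2 h3
  obtain ⟨ha0, hb0⟩ := rat_sqrt5_eq_zero (-g 0 / 4 + g 4 / 2) (g 0 / 4)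
    (by push_cast; linear_combination h0 - (g 4 : ℝ) / 8 * hs)
  obtain ⟨ha1, hb1⟩ := rat_sqrt5_eq_zero
    (-g 0 / 4 - g 1 / 4 + g 2 / 2 - g 3 / 2 - 3 * g 4 / 4 + g 5 / 2 + g 6 / 4 - g 7 / 4)
    ((-g 0 + g 1 - g 4 + g 6 - g 7) / 4)
    (by push_cast; linear_combination h1 + ((g 4 : ℝ) - (g 5 : ℝ)) / 8 * hs)
  obtain ⟨ha2, hb2⟩ := rat_sqrt5_eq_zero
    (-g 1 / 4 - g 2 / 4 - g 3 / 4 - 3 * g 5 / 4 + g 6 / 2 + g 7 / 2)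
    ((-g 1 + g 2 + g 3 - g 5) / 4)
    (by push_cast; linear_combination h2 + ((g 5 : ℝ) - (g 6 : ℝ) - (g 7 : ℝ)) / 8 * hs)
  obtain ⟨ha3, hb3⟩ := rat_sqrt5_eq_zero
    (-g 0 / 2 + g 1 / 2 - g 2 / 4 + g 3 / 4 - g 4 / 4 + g 5 / 4 - 3 * g 6 / 4 + 3 * g 7 / 4)
    ((-g 2 + g 3 - g 4 + g 5 - g 6 + g 7) / 4)
    (by push_cast; linear_combination h3 + ((g 6 : ℝ) - (g 7 : ℝ)) / 8 * hs)
  clear hg h0 h1 h2 h3 hs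
  have e0 : g 0 = 0 := by linarith
  have e4 : g 4 = 0 := by linarith
  have e1 : g 1 = 0 := by linarith
  have e2 : g 2 = 0 := by linarith
  have e3 : g 3 = 0 := by linarith
  have e5 : g 5 = 0 := by linarith
  have e6 : g 6 = 0 := by linarith
  have e7 : g 7 = 0 := by linarith
  intro i
  fin_cases i <;> assumption
end
end
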